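/- arXiv:2111.01010 — 4 statements merged into one kernel-verified Lean document; each statement's English description precedes it below -/
import Mathlib

section
/- For every code C on n neurons, the following are equivalent: (i) C has an open convex realization in ℝ^1; (ii) C has a closed convex realization in ℝ^1; (iii) C has a non-degenerate (open or closed) convex realization in ℝ^1. In particular, odim(C) = 1 if and only if cdim(C) = 1 if and only if nddim(C) = 1. -/
open Set

noncomputable section

/-- Euclidean space `ℝ^d`. -/
abbrev Euc (d : ℕ) : Type := EuclideanSpace ℝ (Fin d)

/-- The code of a collection of sets `U = (U 0, …, U (n-1))` in `ℝ^d`. -/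
def codeOf {n d : ℕ} (U : Fin n → Set (Euc d)) : Set (Finset (Fin n)) :=
  {σ | ∃ p : Euc d, ∀ i : Fin n, p ∈ U i ↔ i ∈ σ}

/-- `U` is an open convex realization of the code `C`. -/
def IsOpenReal {n d : ℕ} (C : Set (Finset (Fin n))) (U : Fin n → Set (Euc d)) : Prop :=
  (∀ i, Convex ℝ (U i)) ∧ (∀ i, IsOpen (U i)) ∧ codeOf U = C

/-- `X` is a closed convex realization of the code `C`. -/
def IsClosedReal {n d : ℕ} (C : Set (Finset (Fin n))) (X : Fin n → Set (Euc d)) : Prop :=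
  (∀ i, Convex ℝ (X i)) ∧ (∀ i, IsClosed (X i)) ∧ codeOf X = C

/-- `C` has an open convex realization in `ℝ^d`. -/
def HasOpenReal {n : ℕ} (C : Set (Finset (Fin n))) (d : ℕ) : Prop :=
  ∃ U : Fin n → Set (Euc d), IsOpenReal C U

/-- `C` has a closed convex realization in `ℝ^d`. -/
def HasClosedReal {n : ℕ} (C : Set (Finset (Fin n))) (d : ℕ) : Prop :=
  ∃ X : Fin n → Set (Euc d), IsClosedReal C X

/-- `U` is a non-degenerate open convex realization of `C`: it is an open convex
realization and the closures of its sets realize the same code. -/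
def IsNondegOpenReal {n d : ℕ} (C : Set (Finset (Fin n))) (U : Fin n → Set (Euc d)) : Prop :=
  IsOpenReal C U ∧ codeOf (fun i => closure (U i)) = C

/-- `X` is a non-degenerate closed convex realization of `C`: it is a closed convex
realization and the interiors of its sets realize the same code. -/
def IsNondegClosedReal {n d : ℕ} (C : Set (Finset (Fin n))) (X : Fin n → Set (Euc d)) : Prop :=
  IsClosedReal C X ∧ codeOf (fun i => interior (X i)) = C

/-- `C` has a non-degenerate (open or closed) convex realization in `ℝ^d`. -/
def HasNondegReal {n : ℕ} (C : Set (Finset (Fin n))) (d : ℕ) : Prop :=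
  (∃ U : Fin n → Set (Euc d), IsNondegOpenReal C U) ∨
  (∃ X : Fin n → Set (Euc d), IsNondegClosedReal C X)

/-- Open embedding dimension (`⊤` if no open convex realization exists). -/
def odim {n : ℕ} (C : Set (Finset (Fin n))) : ℕ∞ :=
  sInf {e : ℕ∞ | ∃ d : ℕ, e = d ∧ HasOpenReal C d}

/-- Closed embedding dimension (`⊤` if no closed convex realization exists). -/
def cdim {n : ℕ} (C : Set (Finset (Fin n))) : ℕ∞ :=
  sInf {e : ℕ∞ | ∃ d : ℕ, e = d ∧ HasClosedReal C d}

/-- Non-degenerate embedding dimension (`⊤` if no non-degenerate realization exists). -/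
def nddim {n : ℕ} (C : Set (Finset (Fin n))) : ℕ∞ :=
  sInf {e : ℕ∞ | ∃ d : ℕ, e = d ∧ HasNondegReal C d}

namespace DimOne

open scoped Classical in
/-- The pattern (codeword) of the family `U` at the point `x`. -/
noncomputable def patt {n : ℕ} {α : Type*} (U : Fin n → Set α) (x : α) : Finset (Fin n) :=
  Finset.univ.filter (fun i => x ∈ U i)

lemma mem_patt {n : ℕ} {α : Type*} {U : Fin n → Set α} {x : α} {i : Fin n} :
    i ∈ patt U x ↔ x ∈ U i := by
  simp [patt]

/-- Code of a family of subsets of an arbitrary type. -/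
def codeR {n : ℕ} {α : Type*} (U : Fin n → Set α) : Set (Finset (Fin n)) :=
  {σ | ∃ p : α, ∀ i, p ∈ U i ↔ i ∈ σ}

lemma patt_mem_codeR {n : ℕ} {α : Type*} (U : Fin n → Set α) (x : α) :
    patt U x ∈ codeR U :=
  ⟨x, fun i => mem_patt.symm⟩

lemma eq_patt_of_witness {n : ℕ} {α : Type*} {U : Fin n → Set α} {x : α} {σ : Finset (Fin n)}
    (h : ∀ i, x ∈ U i ↔ i ∈ σ) : patt U x = σ := by
  ext i; rw [mem_patt, h]

/-- Key lemma: between two points whose strictly-between patterns all have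
"witnesses outside", some point realizes the intersection pattern. -/
lemma key {n : ℕ} (U : Fin n → Set ℝ) (hconv : ∀ i, Convex ℝ (U i))
    (htop : (∀ i, IsOpen (U i)) ∨ (∀ i, IsClosed (U i)))
    (p p' : ℝ) (hle : p ≤ p')
    (hmid : ∀ y ∈ Ioo p p', ∃ q, (q ≤ p ∨ p' ≤ q) ∧ patt U q = patt U y) :
    ∃ x ∈ Icc p p', patt U x = patt U p ∩ patt U p' := by
  by_contra hcon
  push_neg at hcon
  set S := patt U p ∩ patt U p' with hSdef
  have hS : ∀ x ∈ Icc p p', S ⊆ patt U x := by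
    intro x hx i hi
    rw [Finset.mem_inter] at hi
    exact mem_patt.2 ((hconv i).ordConnected.out (mem_patt.1 hi.1) (mem_patt.1 hi.2) hx)
  set A : Set ℝ := {x | x ∈ Icc p p' ∧ patt U x ⊆ patt U p} with hAdef
  set B : Set ℝ := {x | x ∈ Icc p p' ∧ patt U x ⊆ patt U p'} with hBdef
  have hpA : p ∈ A := ⟨⟨le_refl p, hle⟩, le_refl _⟩
  have hp'B : p' ∈ B := ⟨⟨hle, le_refl p'⟩, le_refl _⟩
  have hAB : ∀ x ∈ Icc p p', x ∈ A ∨ x ∈ B := by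
    intro x hx
    rcases eq_or_lt_of_le hx.1 with h | h1
    · exact Or.inl (h ▸ hpA)
    rcases eq_or_lt_of_le hx.2 with h | h2
    · exact Or.inr (h ▸ hp'B)
    obtain ⟨q, hq, hqp⟩ := hmid x ⟨h1, h2⟩
    rcases hq with hq | hq
    · left
      refine ⟨hx, fun i hi => ?_⟩
      have hxi : x ∈ U i := mem_patt.1 hi
      have hqi : q ∈ U i := mem_patt.1 (hqp ▸ hi)
      exact mem_patt.2 ((hconv i).ordConnected.out hqi hxi ⟨hq, hx.1⟩)
    · right
      refine ⟨hx, fun i hi => ?_⟩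
      have hxi : x ∈ U i := mem_patt.1 hi
      have hqi : q ∈ U i := mem_patt.1 (hqp ▸ hi)
      exact mem_patt.2 ((hconv i).ordConnected.out hxi hqi ⟨hx.2, hq⟩)
  have hdisj : ∀ x, x ∈ A → x ∈ B → False := by
    intro x hxA hxB
    exact hcon x hxA.1 (le_antisymm (Finset.subset_inter hxA.2 hxB.2) (hS x hxA.1))
  have hAne : A.Nonempty := ⟨p, hpA⟩
  have hbdd : BddAbove A := ⟨p', fun a ha => ha.1.2⟩
  set c := sSup A with hcdef
  have hc1 : p ≤ c := le_csSup hbdd hpA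
  have hc2 : c ≤ p' := csSup_le hAne (fun a ha => ha.1.2)
  have hcIcc : c ∈ Icc p p' := ⟨hc1, hc2⟩
  -- a strict superset element
  have hexi : ∀ x ∈ Icc p p', ∃ i, i ∈ patt U x ∧ i ∉ S := by
    intro x hx
    exact Finset.exists_of_ssubset (ssubset_of_subset_of_ne (hS x hx) (fun h => hcon x hx h.symm))
  rcases hAB c hcIcc with hcA | hcB
  · -- c ∈ A
    have hcp' : c ≠ p' := by
      intro h
      apply hdisj p' (h ▸ hcA) hp'B
    have hclt : c < p' := lt_of_le_of_ne hc2 hcp'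
    have hB' : ∀ y, c < y → y ≤ p' → y ∈ B := by
      intro y h1 h2
      refine (hAB y ⟨hc1.trans h1.le, h2⟩).resolve_left (fun hyA => ?_)
      exact absurd (le_csSup hbdd hyA) (not_le.2 h1)
    rcases htop with hO | hCl
    · obtain ⟨i, hic, hiS⟩ := hexi c hcIcc
      obtain ⟨ε, hε, hball⟩ := Metric.isOpen_iff.1 (hO i) c (mem_patt.1 hic)
      set y := min (c + ε / 2) p' with hydef
      have hy1 : c < y := lt_min (by linarith) hclt
      have hy2 : y ≤ p' := min_le_right _ _
      have hyball : y ∈ Metric.ball c ε := by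
        rw [Metric.mem_ball, Real.dist_eq, abs_lt]
        constructor
        · have := hy1; linarith
        · have : y ≤ c + ε / 2 := min_le_left _ _; linarith
      have hiy : i ∈ patt U y := mem_patt.2 (hball hyball)
      have hip' : i ∈ patt U p' := (hB' y hy1 hy2).2 hiy
      have hip : i ∈ patt U p := hcA.2 hic
      exact hiS (Finset.mem_inter.2 ⟨hip, hip'⟩)
    · -- closed case
      have hcover : Ioc c p' ⊆ ⋃ i ∈ (↑(patt U p' \ S) : Set (Fin n)), U i := by
        intro y hy
        have hyB : y ∈ B := hB' y hy.1 hy.2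
        obtain ⟨i, hiy, hiS⟩ := hexi y hyB.1
        refine mem_biUnion ?_ (mem_patt.1 hiy)
        simp only [Finset.coe_sdiff, Finset.mem_coe, Finset.mem_sdiff]
        exact ⟨hyB.2 hiy, hiS⟩
      have hclosed : IsClosed (⋃ i ∈ (↑(patt U p' \ S) : Set (Fin n)), U i) :=
        Set.Finite.isClosed_biUnion (Set.toFinite _) (fun i _ => hCl i)
      have hcmem : c ∈ ⋃ i ∈ (↑(patt U p' \ S) : Set (Fin n)), U i := by
        have h1 : c ∈ closure (Ioc c p') := by
          rw [closure_Ioc hcp']; exact ⟨le_refl _, hc2⟩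
        exact hclosed.closure_eq ▸ (closure_mono hcover h1)
      simp only [mem_iUnion, exists_prop] at hcmem
      obtain ⟨i, hi, hci⟩ := hcmem
      simp only [Finset.coe_sdiff, Finset.mem_coe, Finset.mem_sdiff] at hi
      exact hi.2 (Finset.mem_inter.2 ⟨hcA.2 (mem_patt.2 hci), hi.1⟩)
  · -- c ∈ B
    rcases htop with hO | hCl
    · obtain ⟨i, hic, hiS⟩ := hexi c hcIcc
      obtain ⟨ε, hε, hball⟩ := Metric.isOpen_iff.1 (hO i) c (mem_patt.1 hic)
      obtain ⟨a, haA, hca⟩ := exists_lt_of_lt_csSup hAne (show c - ε < sSup A by rw [← hcdef]; linarith)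
      have hac : a ≤ c := le_csSup hbdd haA
      have haball : a ∈ Metric.ball c ε := by
        rw [Metric.mem_ball, Real.dist_eq, abs_lt]
        constructor <;> linarith
      have hia : i ∈ patt U a := mem_patt.2 (hball haball)
      have hip : i ∈ patt U p := haA.2 hia
      have hip' : i ∈ patt U p' := hcB.2 hic
      exact hiS (Finset.mem_inter.2 ⟨hip, hip'⟩)
    · have hcover : A ⊆ ⋃ i ∈ (↑(patt U p \ S) : Set (Fin n)), U i := by
        intro a haA
        obtain ⟨i, hia, hiS⟩ := hexi a haA.1
        refine mem_biUnion ?_ (mem_patt.1 hia)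
        simp only [Finset.coe_sdiff, Finset.mem_coe, Finset.mem_sdiff]
        exact ⟨haA.2 hia, hiS⟩
      have hclosed : IsClosed (⋃ i ∈ (↑(patt U p \ S) : Set (Fin n)), U i) :=
        Set.Finite.isClosed_biUnion (Set.toFinite _) (fun i _ => hCl i)
      have hcmem : c ∈ ⋃ i ∈ (↑(patt U p \ S) : Set (Fin n)), U i := by
        have h1 : c ∈ closure A := csSup_mem_closure hAne hbdd
        exact hclosed.closure_eq ▸ (closure_mono hcover h1)
      simp only [mem_iUnion, exists_prop] at hcmem
      obtain ⟨i, hi, hci⟩ := hcmem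
      simp only [Finset.coe_sdiff, Finset.mem_coe, Finset.mem_sdiff] at hi
      exact hi.2 (Finset.mem_inter.2 ⟨hi.1, hcB.2 (mem_patt.2 hci)⟩)


lemma exists_delta (P : Finset ℝ) : ∃ δ : ℝ, 0 < δ ∧ ∀ a ∈ P, ∀ b ∈ P, a ≠ b → δ ≤ |a - b| := by
  classical
  set D : Finset ℝ := ((P ×ˢ P).filter (fun q => q.1 ≠ q.2)).image (fun q : ℝ × ℝ => |q.1 - q.2|)
    with hDdef
  have hpos : ∀ x ∈ D, 0 < x := by
    intro x hx
    rw [hDdef, Finset.mem_image] at hx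
    obtain ⟨q, hq, rfl⟩ := hx
    exact abs_pos.2 (sub_ne_zero.2 (Finset.mem_filter.1 hq).2)
  have hmem : ∀ a ∈ P, ∀ b ∈ P, a ≠ b → |a - b| ∈ D := by
    intro a ha b hb hab
    rw [hDdef, Finset.mem_image]
    exact ⟨(a, b), Finset.mem_filter.2 ⟨Finset.mem_product.2 ⟨ha, hb⟩, hab⟩, rfl⟩
  by_cases h : D.Nonempty
  · exact ⟨D.min' h, hpos _ (D.min'_mem h), fun a ha b hb hab => D.min'_le _ (hmem a ha b hb hab)⟩
  · exact ⟨1, one_pos, fun a ha b hb hab => absurd ⟨_, hmem a ha b hb hab⟩ h⟩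

lemma mainR {n : ℕ} (C : Set (Finset (Fin n))) (hC : ∅ ∈ C)
    (U : Fin n → Set ℝ) (hconv : ∀ i, Convex ℝ (U i))
    (htop : (∀ i, IsOpen (U i)) ∨ (∀ i, IsClosed (U i)))
    (hcode : codeR U = C) :
    ∃ V : Fin n → Set ℝ, (∀ i, Convex ℝ (V i)) ∧ (∀ i, IsOpen (V i)) ∧
      codeR V = C ∧ codeR (fun i => closure (V i)) = C := by
  classical
  -- witnesses
  have hwit : ∀ σ ∈ C, ∃ p : ℝ, ∀ i, p ∈ U i ↔ i ∈ σ := by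
    intro σ hσ; rw [← hcode] at hσ; exact hσ
  set w : Finset (Fin n) → ℝ := fun σ => if h : σ ∈ C then (hwit σ h).choose else 0 with hwdef
  have hw : ∀ σ (h : σ ∈ C), ∀ i, w σ ∈ U i ↔ i ∈ σ := by
    intro σ h i; rw [hwdef]; simp only [dif_pos h]; exact (hwit σ h).choose_spec i
  have hpattw : ∀ σ (h : σ ∈ C), patt U (w σ) = σ := fun σ h => eq_patt_of_witness (hw σ h)
  set P : Finset ℝ := (Set.toFinite C).toFinset.image w with hPdef
  have hPmem : ∀ σ ∈ C, w σ ∈ P := by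
    intro σ hσ; rw [hPdef]; exact Finset.mem_image_of_mem w ((Set.Finite.mem_toFinset _).2 hσ)
  have hPpatt : ∀ q ∈ P, patt U q ∈ C := by
    intro q hq
    rw [hPdef, Finset.mem_image] at hq
    obtain ⟨σ, hσ, rfl⟩ := hq
    rw [Set.Finite.mem_toFinset] at hσ
    rw [hpattw σ hσ]; exact hσ
  have hPne : P.Nonempty := ⟨w ∅, hPmem ∅ hC⟩
  set W : Fin n → Finset ℝ := fun i => P.filter (· ∈ U i) with hWdef
  have hWP : ∀ i, W i ⊆ P := fun i => Finset.filter_subset _ _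
  have hWU : ∀ i, ∀ x ∈ W i, x ∈ U i := by
    intro i x hx; rw [hWdef] at hx; exact (Finset.mem_filter.1 hx).2
  have hWmem : ∀ i, ∀ x ∈ P, x ∈ U i → x ∈ W i := by
    intro i x hxP hxU; rw [hWdef]; exact Finset.mem_filter.2 ⟨hxP, hxU⟩
  set X : Fin n → Set ℝ :=
    fun i => if h : (W i).Nonempty then Icc ((W i).min' h) ((W i).max' h) else ∅ with hXdef
  have memX : ∀ i x, x ∈ X i ↔ ((∃ a ∈ W i, a ≤ x) ∧ (∃ b ∈ W i, x ≤ b)) := by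
    intro i x
    by_cases h : (W i).Nonempty
    · rw [hXdef]; simp only [dif_pos h, mem_Icc]
      constructor
      · rintro ⟨h1, h2⟩
        exact ⟨⟨_, (W i).min'_mem h, h1⟩, ⟨_, (W i).max'_mem h, h2⟩⟩
      · rintro ⟨⟨a, ha, hax⟩, ⟨b, hb, hxb⟩⟩
        exact ⟨((W i).min'_le a ha).trans hax, hxb.trans ((W i).le_max' b hb)⟩
    · rw [hXdef]; simp only [dif_neg h, mem_empty_iff_false, false_iff]
      rintro ⟨⟨a, ha, -⟩, -⟩; exact h ⟨a, ha⟩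
  have hXU : ∀ i, X i ⊆ U i := by
    intro i x hx
    obtain ⟨⟨a, ha, hax⟩, ⟨b, hb, hxb⟩⟩ := (memX i x).1 hx
    exact (hconv i).ordConnected.out (hWU i a ha) (hWU i b hb) ⟨hax, hxb⟩
  have pattXP : ∀ q ∈ P, patt X q = patt U q := by
    intro q hq
    ext i
    rw [mem_patt, mem_patt, memX]
    constructor
    · rintro ⟨⟨a, ha, hax⟩, ⟨b, hb, hxb⟩⟩
      exact (hconv i).ordConnected.out (hWU i a ha) (hWU i b hb) ⟨hax, hxb⟩
    · intro hqi
      exact ⟨⟨q, hWmem i q hq hqi, le_refl _⟩, ⟨q, hWmem i q hq hqi, le_refl _⟩⟩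
  have hcodeX : codeR X = C := by
    apply Set.Subset.antisymm
    · rintro τ ⟨x, hx⟩
      rw [← eq_patt_of_witness hx]
      by_cases hex : (∃ a ∈ P, a ≤ x) ∧ (∃ b ∈ P, x ≤ b)
      · obtain ⟨⟨a0, ha0, hax0⟩, ⟨b0, hb0, hxb0⟩⟩ := hex
        by_cases hxP : x ∈ P
        · rw [pattXP x hxP]; exact hPpatt x hxP
        · set L := P.filter (· ≤ x) with hLdef
          set R := P.filter (x ≤ ·) with hRdef
          have hLne : L.Nonempty := ⟨a0, Finset.mem_filter.2 ⟨ha0, hax0⟩⟩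
          have hRne : R.Nonempty := ⟨b0, Finset.mem_filter.2 ⟨hb0, hxb0⟩⟩
          set p := L.max' hLne with hpdef
          set p' := R.min' hRne with hp'def
          have hpL : p ∈ L := L.max'_mem hLne
          have hp'R : p' ∈ R := R.min'_mem hRne
          have hpP : p ∈ P := (Finset.mem_filter.1 hpL).1
          have hp'P : p' ∈ P := (Finset.mem_filter.1 hp'R).1
          have hpx : p ≤ x := (Finset.mem_filter.1 hpL).2
          have hxp' : x ≤ p' := (Finset.mem_filter.1 hp'R).2
          have hpmax : ∀ q ∈ P, q ≤ x → q ≤ p := by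
            intro q hq hqx; exact L.le_max' q (Finset.mem_filter.2 ⟨hq, hqx⟩)
          have hp'min : ∀ q ∈ P, x ≤ q → p' ≤ q := by
            intro q hq hqx; exact R.min'_le q (Finset.mem_filter.2 ⟨hq, hqx⟩)
          have hplt : p < x := lt_of_le_of_ne hpx (fun h => hxP (h ▸ hpP))
          have hxlt : x < p' := lt_of_le_of_ne hxp' (fun h => hxP (h ▸ hp'P))
          have claim1 : patt X x = patt U p ∩ patt U p' := by
            ext i
            rw [mem_patt, Finset.mem_inter, mem_patt, mem_patt, memX]
            constructor
            · rintro ⟨⟨a, ha, hax⟩, ⟨b, hb, hxb⟩⟩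
              have hai : a ∈ U i := hWU i a ha
              have hbi : b ∈ U i := hWU i b hb
              have hap : a ≤ p := hpmax a (hWP i ha) hax
              have hp'b : p' ≤ b := hp'min b (hWP i hb) hxb
              exact ⟨(hconv i).ordConnected.out hai hbi ⟨hap, hpx.trans (hxp'.trans hp'b)⟩,
                (hconv i).ordConnected.out hai hbi ⟨hap.trans (hpx.trans hxp'), hp'b⟩⟩
            · rintro ⟨hpi, hp'i⟩
              exact ⟨⟨p, hWmem i p hpP hpi, hpx⟩, ⟨p', hWmem i p' hp'P hp'i, hxp'⟩⟩
          have hmid : ∀ y ∈ Ioo p p', ∃ q, (q ≤ p ∨ p' ≤ q) ∧ patt U q = patt U y := by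
            intro y _
            have hy1 : patt U y ∈ C := hcode ▸ patt_mem_codeR U y
            refine ⟨w (patt U y), ?_, hpattw _ hy1⟩
            rcases le_or_gt (w (patt U y)) x with h | h
            · exact Or.inl (hpmax _ (hPmem _ hy1) h)
            · exact Or.inr (hp'min _ (hPmem _ hy1) h.le)
          obtain ⟨y, _, hyS⟩ := key U hconv htop p p' (hplt.trans hxlt).le hmid
          rw [claim1, ← hyS]
          exact hcode ▸ patt_mem_codeR U y
      · have hempty : patt X x = ∅ := by
          rw [Finset.eq_empty_iff_forall_notMem]
          intro i hi
          obtain ⟨⟨a, ha, hax⟩, ⟨b, hb, hxb⟩⟩ := (memX i x).1 (mem_patt.1 hi)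
          exact hex ⟨⟨a, hWP i ha, hax⟩, ⟨b, hWP i hb, hxb⟩⟩
        rw [hempty]; exact hC
    · intro σ hσ
      refine ⟨w σ, fun i => ?_⟩
      rw [show (w σ ∈ X i ↔ i ∈ patt X (w σ)) from mem_patt.symm,
        pattXP _ (hPmem σ hσ), hpattw σ hσ]
  -- the fattening
  obtain ⟨δ, hδpos, hδle⟩ := exists_delta P
  set ε : ℝ := δ / 4 with hεdef
  have hεpos : 0 < ε := by rw [hεdef]; linarith
  have hεδ : 4 * ε = δ := by rw [hεdef]; ring
  set V : Fin n → Set ℝ :=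
    fun i => if h : (W i).Nonempty then
      Ioo ((W i).min' h - ε) ((W i).max' h + ε) else ∅ with hVdef
  have hVopen : ∀ i, IsOpen (V i) := by
    intro i; rw [hVdef]; dsimp only; split_ifs; exacts [isOpen_Ioo, isOpen_empty]
  have hVconv : ∀ i, Convex ℝ (V i) := by
    intro i; rw [hVdef]; dsimp only; split_ifs; exacts [convex_Ioo _ _, convex_empty]
  have memV : ∀ i x, x ∈ V i ↔
      ∃ h : (W i).Nonempty, (W i).min' h - ε < x ∧ x < (W i).max' h + ε := by
    intro i x
    rw [hVdef]; dsimp only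
    split_ifs with h
    · simp [mem_Ioo, h]
    · simp [h]
  have memclV : ∀ i x, x ∈ closure (V i) ↔
      ∃ h : (W i).Nonempty, (W i).min' h - ε ≤ x ∧ x ≤ (W i).max' h + ε := by
    intro i x
    rw [hVdef]; dsimp only
    split_ifs with h
    · rw [closure_Ioo (by
        have : (W i).min' h ≤ (W i).max' h := (W i).min'_le _ ((W i).max'_mem h)
        intro heq; rw [← sub_eq_zero] at heq; nlinarith)]
      simp [mem_Icc, h]
    · simp [h]
  have memX' : ∀ i x, x ∈ X i ↔
      ∃ h : (W i).Nonempty, (W i).min' h ≤ x ∧ x ≤ (W i).max' h := by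
    intro i x
    rw [hXdef]; dsimp only
    split_ifs with h
    · simp [mem_Icc, h]
    · simp [h]
  -- near / far pattern identification
  have hnear_open : ∀ x e, e ∈ P → |x - e| < ε → ∀ i, (x ∈ V i ↔ e ∈ X i) := by
    intro x e heP hxe i
    rw [memV, memX']
    rw [abs_lt] at hxe
    constructor
    · rintro ⟨h, h1, h2⟩
      have hmP : (W i).min' h ∈ P := hWP i ((W i).min'_mem h)
      have hMP : (W i).max' h ∈ P := hWP i ((W i).max'_mem h)
      refine ⟨h, ?_, ?_⟩
      · by_contra hlt
        push_neg at hlt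
        have hne : (W i).min' h ≠ e := ne_of_gt hlt
        have := hδle _ hmP e heP hne
        rw [abs_of_pos (by linarith)] at this
        linarith
      · by_contra hlt
        push_neg at hlt
        have hne : (W i).max' h ≠ e := ne_of_lt hlt
        have := hδle _ hMP e heP hne
        rw [abs_of_neg (by linarith)] at this
        linarith
    · rintro ⟨h, h1, h2⟩
      exact ⟨h, by linarith, by linarith⟩
  have hnear_cl : ∀ x e, e ∈ P → |x - e| ≤ ε → ∀ i, (x ∈ closure (V i) ↔ e ∈ X i) := by
    intro x e heP hxe i
    rw [memclV, memX']
    rw [abs_le] at hxe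
    constructor
    · rintro ⟨h, h1, h2⟩
      have hmP : (W i).min' h ∈ P := hWP i ((W i).min'_mem h)
      have hMP : (W i).max' h ∈ P := hWP i ((W i).max'_mem h)
      refine ⟨h, ?_, ?_⟩
      · by_contra hlt
        push_neg at hlt
        have hne : (W i).min' h ≠ e := ne_of_gt hlt
        have := hδle _ hmP e heP hne
        rw [abs_of_pos (by linarith)] at this
        linarith
      · by_contra hlt
        push_neg at hlt
        have hne : (W i).max' h ≠ e := ne_of_lt hlt
        have := hδle _ hMP e heP hne
        rw [abs_of_neg (by linarith)] at this
        linarith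
    · rintro ⟨h, h1, h2⟩
      exact ⟨h, by linarith, by linarith⟩
  have hfar_open : ∀ x, (∀ e ∈ P, ε ≤ |x - e|) → ∀ i, (x ∈ V i ↔ x ∈ X i) := by
    intro x hx i
    rw [memV, memX']
    constructor
    · rintro ⟨h, h1, h2⟩
      have hm := hx _ (hWP i ((W i).min'_mem h))
      have hM := hx _ (hWP i ((W i).max'_mem h))
      refine ⟨h, ?_, ?_⟩
      · rcases abs_cases (x - (W i).min' h) with ⟨he, _⟩ | ⟨he, _⟩ <;> linarith
      · rcases abs_cases (x - (W i).max' h) with ⟨he, _⟩ | ⟨he, _⟩ <;> linarith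
    · rintro ⟨h, h1, h2⟩
      exact ⟨h, by linarith, by linarith⟩
  have hfar_cl : ∀ x, (∀ e ∈ P, ε < |x - e|) → ∀ i, (x ∈ closure (V i) ↔ x ∈ X i) := by
    intro x hx i
    rw [memclV, memX']
    constructor
    · rintro ⟨h, h1, h2⟩
      have hm := hx _ (hWP i ((W i).min'_mem h))
      have hM := hx _ (hWP i ((W i).max'_mem h))
      refine ⟨h, ?_, ?_⟩
      · rcases abs_cases (x - (W i).min' h) with ⟨he, _⟩ | ⟨he, _⟩ <;> linarith
      · rcases abs_cases (x - (W i).max' h) with ⟨he, _⟩ | ⟨he, _⟩ <;> linarith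
    · rintro ⟨h, h1, h2⟩
      exact ⟨h, by linarith, by linarith⟩
  -- codes of V and closure V
  have hcodeV : codeR V = C := by
    apply Set.Subset.antisymm
    · rintro τ ⟨x, hx⟩
      rw [← eq_patt_of_witness hx]
      by_cases hcase : ∃ e ∈ P, |x - e| < ε
      · obtain ⟨e, heP, he⟩ := hcase
        have : patt V x = patt X e := by
          ext i; rw [mem_patt, mem_patt, hnear_open x e heP he i]
        rw [this]
        exact hcodeX ▸ patt_mem_codeR X e
      · push_neg at hcase
        have : patt V x = patt X x := by
          ext i; rw [mem_patt, mem_patt, hfar_open x hcase i]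
        rw [this]
        exact hcodeX ▸ patt_mem_codeR X x
    · intro σ hσ
      refine ⟨w σ, fun i => ?_⟩
      rw [hnear_open (w σ) (w σ) (hPmem σ hσ) (by simpa using hεpos) i,
        show (w σ ∈ X i ↔ i ∈ patt X (w σ)) from mem_patt.symm,
        pattXP _ (hPmem σ hσ), hpattw σ hσ]
  have hcodeclV : codeR (fun i => closure (V i)) = C := by
    apply Set.Subset.antisymm
    · rintro τ ⟨x, hx⟩
      rw [← eq_patt_of_witness hx]
      by_cases hcase : ∃ e ∈ P, |x - e| ≤ ε
      · obtain ⟨e, heP, he⟩ := hcase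
        have : patt (fun i => closure (V i)) x = patt X e := by
          ext i; rw [mem_patt, mem_patt]; exact hnear_cl x e heP he i
        rw [this]
        exact hcodeX ▸ patt_mem_codeR X e
      · push_neg at hcase
        have : patt (fun i => closure (V i)) x = patt X x := by
          ext i; rw [mem_patt, mem_patt]; exact hfar_cl x hcase i
        rw [this]
        exact hcodeX ▸ patt_mem_codeR X x
    · intro σ hσ
      refine ⟨w σ, fun i => ?_⟩
      rw [show ((w σ) ∈ closure (V i) ↔ w σ ∈ X i) from
          hnear_cl (w σ) (w σ) (hPmem σ hσ) (by simp [le_of_lt hεpos]) i,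
        show (w σ ∈ X i ↔ i ∈ patt X (w σ)) from mem_patt.symm,
        pattXP _ (hPmem σ hσ), hpattw σ hσ]
  exact ⟨V, hVconv, hVopen, hcodeV, hcodeclV⟩

noncomputable def phi : Euc 1 ≃L[ℝ] ℝ :=
  (EuclideanSpace.equiv (Fin 1) ℝ).trans (ContinuousLinearEquiv.funUnique (Fin 1) ℝ ℝ)

lemma codeR_symm {n : ℕ} (U' : Fin n → Set (Euc 1)) :
    codeR (fun i => phi.symm ⁻¹' (U' i)) = codeOf U' := by
  ext σ
  constructor
  · rintro ⟨x, hx⟩; exact ⟨phi.symm x, hx⟩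
  · rintro ⟨p, hp⟩
    refine ⟨phi p, fun i => ?_⟩
    simpa using hp i

lemma codeOf_preimage {n : ℕ} (V : Fin n → Set ℝ) :
    codeOf (fun i => phi ⁻¹' (V i)) = codeR V := by
  ext σ
  constructor
  · rintro ⟨p, hp⟩; exact ⟨phi p, hp⟩
  · rintro ⟨x, hx⟩
    refine ⟨phi.symm x, fun i => ?_⟩
    simpa using hx i

lemma build {n : ℕ} (C : Set (Finset (Fin n))) (hC : ∅ ∈ C)
    (h : HasOpenReal C 1 ∨ HasClosedReal C 1) :
    HasOpenReal C 1 ∧ HasClosedReal C 1 ∧ HasNondegReal C 1 := by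
  have hex : ∃ U : Fin n → Set ℝ, (∀ i, Convex ℝ (U i)) ∧
      ((∀ i, IsOpen (U i)) ∨ (∀ i, IsClosed (U i))) ∧ codeR U = C := by
    rcases h with ⟨U', hconv, hopen, hcode⟩ | ⟨U', hconv, hcl, hcode⟩
    · exact ⟨fun i => phi.symm ⁻¹' (U' i),
        fun i => (hconv i).linear_preimage (phi.symm : ℝ →ₗ[ℝ] Euc 1),
        Or.inl fun i => (hopen i).preimage phi.symm.continuous,
        (codeR_symm U').trans hcode⟩
    · exact ⟨fun i => phi.symm ⁻¹' (U' i),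
        fun i => (hconv i).linear_preimage (phi.symm : ℝ →ₗ[ℝ] Euc 1),
        Or.inr fun i => (hcl i).preimage phi.symm.continuous,
        (codeR_symm U').trans hcode⟩
  obtain ⟨U, hconv, htop, hcode⟩ := hex
  obtain ⟨V, hVconv, hVopen, hV1, hV2⟩ := mainR C hC U hconv htop hcode
  set V' : Fin n → Set (Euc 1) := fun i => phi ⁻¹' (V i) with hV'def
  have hV'conv : ∀ i, Convex ℝ (V' i) :=
    fun i => (hVconv i).linear_preimage (phi : Euc 1 →ₗ[ℝ] ℝ)
  have hV'open : ∀ i, IsOpen (V' i) := fun i => (hVopen i).preimage phi.continuous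
  have hV'code : codeOf V' = C := (codeOf_preimage V).trans hV1
  have hclcode : codeOf (fun i => closure (V' i)) = C := by
    have hcl : (fun i => closure (V' i)) = fun i => phi ⁻¹' (closure (V i)) :=
      funext fun i => (phi.toHomeomorph.preimage_closure (V i)).symm
    rw [hcl, codeOf_preimage (fun i => closure (V i))]
    exact hV2
  refine ⟨⟨V', hV'conv, hV'open, hV'code⟩, ?_, ?_⟩
  · exact ⟨fun i => closure (V' i), fun i => (hV'conv i).closure,
      fun i => isClosed_closure, hclcode⟩
  · exact Or.inl ⟨V', ⟨hV'conv, hV'open, hV'code⟩, hclcode⟩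

lemma euc0_clopen (S : Set (Euc 0)) : IsOpen S ∧ IsClosed S := by
  rcases S.eq_empty_or_nonempty with rfl | ⟨y, hy⟩
  · exact ⟨isOpen_empty, isClosed_empty⟩
  · have hS : S = univ := eq_univ_of_forall (fun x => (Subsingleton.elim x y) ▸ hy)
    rw [hS]; exact ⟨isOpen_univ, isClosed_univ⟩

lemma d0_oc {n : ℕ} (C : Set (Finset (Fin n))) : HasOpenReal C 0 ↔ HasClosedReal C 0 := by
  constructor
  · rintro ⟨U, hconv, -, hcode⟩; exact ⟨U, hconv, fun i => (euc0_clopen _).2, hcode⟩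
  · rintro ⟨U, hconv, -, hcode⟩; exact ⟨U, hconv, fun i => (euc0_clopen _).1, hcode⟩

lemma d0_cn {n : ℕ} (C : Set (Finset (Fin n))) : HasClosedReal C 0 ↔ HasNondegReal C 0 := by
  constructor
  · rintro ⟨X, hconv, hcl, hcode⟩
    left
    have hcls : (fun i => closure (X i)) = X :=
      funext fun i => (euc0_clopen (X i)).2.closure_eq
    exact ⟨X, ⟨hconv, fun i => (euc0_clopen _).1, hcode⟩, by rw [hcls]; exact hcode⟩
  · rintro (⟨U, ⟨hconv, -, hcode⟩, -⟩ | ⟨X, hX, -⟩)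
    · exact ⟨U, hconv, fun i => (euc0_clopen _).2, hcode⟩
    · exact ⟨X, hX⟩

lemma sInf_nat_eq_one_iff (Q : ℕ → Prop) :
    sInf {e : ℕ∞ | ∃ d : ℕ, e = d ∧ Q d} = 1 ↔ (Q 1 ∧ ¬ Q 0) := by
  constructor
  · intro h
    have h0 : ¬ Q 0 := by
      intro hq
      have hle : sInf {e : ℕ∞ | ∃ d : ℕ, e = ↑d ∧ Q d} ≤ 0 := sInf_le ⟨0, by simp, hq⟩
      rw [h] at hle; exact absurd hle (by norm_num)
    refine ⟨?_, h0⟩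
    by_contra h1
    have h2 : (2 : ℕ∞) ≤ sInf {e : ℕ∞ | ∃ d : ℕ, e = ↑d ∧ Q d} := by
      apply le_sInf
      rintro e ⟨d, rfl, hd⟩
      match d with
      | 0 => exact absurd hd h0
      | 1 => exact absurd hd h1
      | (k+2) => exact_mod_cast (by omega : 2 ≤ k + 2)
    rw [h] at h2; norm_num at h2
  · rintro ⟨h1, h0⟩
    apply le_antisymm
    · exact sInf_le ⟨1, by norm_num, h1⟩
    · apply le_sInf
      rintro e ⟨d, rfl, hd⟩
      have hd0 : d ≠ 0 := fun h => h0 (h ▸ hd)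
      exact_mod_cast Nat.one_le_iff_ne_zero.2 hd0

end DimOne

/-- For any code, having an open, closed, or non-degenerate convex realization in `ℝ^1`
are all equivalent; in particular `odim C = 1 ↔ cdim C = 1 ↔ nddim C = 1`. -/



theorem dim_one_equivalences {n : ℕ} (C : Set (Finset (Fin n))) (hC : ∅ ∈ C) :
    (HasOpenReal C 1 ↔ HasClosedReal C 1) ∧
    (HasClosedReal C 1 ↔ HasNondegReal C 1) ∧
    (odim C = 1 ↔ cdim C = 1) ∧
    (cdim C = 1 ↔ nddim C = 1) := by
  have con1 : HasOpenReal C 1 ↔ HasClosedReal C 1 :=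
    ⟨fun h => (DimOne.build C hC (Or.inl h)).2.1, fun h => (DimOne.build C hC (Or.inr h)).1⟩
  have con2 : HasClosedReal C 1 ↔ HasNondegReal C 1 := by
    constructor
    · intro h; exact (DimOne.build C hC (Or.inr h)).2.2
    · rintro (⟨U, hU, -⟩ | ⟨X, hX, -⟩)
      · exact (DimOne.build C hC (Or.inl ⟨U, hU⟩)).2.1
      · exact ⟨X, hX⟩
  have hodim : odim C = 1 ↔ (HasOpenReal C 1 ∧ ¬ HasOpenReal C 0) :=
    DimOne.sInf_nat_eq_one_iff (HasOpenReal C)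
  have hcdim : cdim C = 1 ↔ (HasClosedReal C 1 ∧ ¬ HasClosedReal C 0) :=
    DimOne.sInf_nat_eq_one_iff (HasClosedReal C)
  have hnddim : nddim C = 1 ↔ (HasNondegReal C 1 ∧ ¬ HasNondegReal C 0) :=
    DimOne.sInf_nat_eq_one_iff (HasNondegReal C)
  refine ⟨con1, con2, ?_, ?_⟩
  · rw [hodim, hcdim]
    exact and_congr con1 (not_congr (DimOne.d0_oc C))
  · rw [hcdim, hnddim]
    exact and_congr con2 (not_congr (DimOne.d0_cn C))

end
end

section
/- Let C be a code on n neurons and D a code on m neurons, and let C ⊔ D be the code on n + m neurons whose codewords are the codewords of C (on the first n indices) together with the codewords of D (shifted to the last m indices). Then for every d ≥ 1, C ⊔ D has an open convex realization in ℝ^d if and only if both C and D have open convex realizations in ℝ^d. Consequently odim(C ⊔ D) = max{odim(C), odim(D)}. -/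
open Set

noncomputable section

/-- Embedding of `Fin n` into the first `n` indices of `Fin (n + m)`. -/
def finLeftEmb (n m : ℕ) : Fin n ↪ Fin (n + m) :=
  ⟨fun i => ⟨i.1, Nat.lt_of_lt_of_le i.2 (Nat.le_add_right n m)⟩,
    fun a b h => by apply Fin.ext; simpa using congrArg Fin.val h⟩

/-- Embedding of `Fin m` into the last `m` indices of `Fin (n + m)`. -/
def finRightEmb (n m : ℕ) : Fin m ↪ Fin (n + m) :=
  ⟨fun i => ⟨n + i.1, Nat.add_lt_add_left i.2 n⟩,
    fun a b h => by apply Fin.ext; have := congrArg Fin.val h; simpa using this⟩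

/-- The disjoint union `C ⊔ D` of a code on `n` neurons (on the first `n` indices)
and a code on `m` neurons (shifted to the last `m` indices). -/
def codeSum {n m : ℕ} (C : Set (Finset (Fin n))) (D : Set (Finset (Fin m))) :
    Set (Finset (Fin (n + m))) :=
  {τ | ∃ σ ∈ C, τ = σ.map (finLeftEmb n m)} ∪ {τ | ∃ σ ∈ D, τ = σ.map (finRightEmb n m)}

/-! ### Auxiliary lemmas -/

namespace CodeSumAux

open Metric

variable {n m d : ℕ}

lemma hasOpenReal_singleton_empty (n d : ℕ) :
    HasOpenReal ({∅} : Set (Finset (Fin n))) d := by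
  refine ⟨fun _ => ∅, fun i => convex_empty, fun i => isOpen_empty, ?_⟩
  ext σ
  simp only [codeOf, Set.mem_setOf_eq, Set.mem_singleton_iff]
  constructor
  · rintro ⟨p, hp⟩
    ext i
    simp [← hp i]
  · rintro rfl
    exact ⟨0, fun i => by simp⟩

lemma eq_singleton_of_dim_zero {C : Set (Finset (Fin n))} (h : HasOpenReal C 0)
    (h0 : ∅ ∈ C) : C = {∅} := by
  obtain ⟨U, -, -, hcode⟩ := h
  have key : ∀ a b : Euc 0, a = b := fun a b => PiLp.ext fun i => i.elim0
  ext σ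
  simp only [Set.mem_singleton_iff]
  constructor
  · intro hσ
    rw [← hcode] at hσ h0
    obtain ⟨p, hp⟩ := hσ
    obtain ⟨q, hq⟩ := h0
    ext i
    simp only [Finset.notMem_empty, iff_false]
    intro hi
    have := (hp i).mpr hi
    rw [key p q] at this
    exact (by simpa using (hq i).mp this)
  · rintro rfl; exact h0

lemma codeSum_singleton : codeSum ({∅} : Set (Finset (Fin n))) ({∅} : Set (Finset (Fin m)))
    = {∅} := by
  ext τ
  simp only [codeSum, Set.mem_union, Set.mem_setOf_eq, Set.mem_singleton_iff]
  constructor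
  · rintro (⟨σ, rfl, rfl⟩ | ⟨σ, rfl, rfl⟩) <;> simp
  · rintro rfl
    exact Or.inl ⟨∅, rfl, by simp⟩

/-- Projection onto the first `d` coordinates. -/
def projL (h : d ≤ m) : Euc m →ₗ[ℝ] Euc d where
  toFun x := WithLp.toLp 2 (fun i => x (Fin.castLE h i))
  map_add' _ _ := rfl
  map_smul' _ _ := rfl

lemma hasOpenReal_mono {C : Set (Finset (Fin n))} {d d' : ℕ} (hdd : d ≤ d')
    (h : HasOpenReal C d) : HasOpenReal C d' := by
  obtain ⟨U, hconv, hopen, hcode⟩ := h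
  have hπc : Continuous (projL (m := d') hdd) :=
    LinearMap.continuous_of_finiteDimensional _
  refine ⟨fun i => projL hdd ⁻¹' U i, fun i => (hconv i).linear_preimage _,
    fun i => (hopen i).preimage hπc, ?_⟩
  have sect : ∀ p : Euc d, ∃ q : Euc d', projL hdd q = p := by
    intro p
    refine ⟨WithLp.toLp 2 (fun j => if hj : (j : ℕ) < d then p ⟨j, hj⟩ else 0), ?_⟩
    ext i
    show (if hj : ((Fin.castLE hdd i : Fin d') : ℕ) < d then p ⟨_, hj⟩ else 0) = p i
    rw [dif_pos (by simpa using i.isLt)]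
    exact congrArg p (Fin.ext rfl)
  rw [← hcode]
  ext σ
  constructor
  · rintro ⟨q, hq⟩
    exact ⟨projL hdd q, hq⟩
  · rintro ⟨p, hp⟩
    obtain ⟨q, rfl⟩ := sect p
    exact ⟨q, hp⟩

lemma exists_bounded_real {C : Set (Finset (Fin n))} (h0 : ∅ ∈ C)
    {U : Fin n → Set (Euc d)} (hU : IsOpenReal C U) :
    ∃ R > (0 : ℝ), ∃ U' : Fin n → Set (Euc d),
      IsOpenReal C U' ∧ ∀ i, U' i ⊆ ball (0 : Euc d) R := by
  classical
  obtain ⟨hconv, hopen, hcode⟩ := hU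
  set w : Finset (Fin n) → Euc d := fun σ => if h : σ ∈ codeOf U then h.choose else 0 with hw
  obtain ⟨r, hr⟩ := (Set.finite_range w).isBounded.subset_ball (0 : Euc d)
  set R := max r 1 with hR
  have hR0 : (0 : ℝ) < R := lt_of_lt_of_le one_pos (le_max_right _ _)
  have hball : ∀ σ, w σ ∈ ball (0 : Euc d) R := fun σ =>
    ball_subset_ball (le_max_left r 1) (hr (Set.mem_range_self σ))
  refine ⟨R, hR0, fun i => U i ∩ ball 0 R,
    ⟨fun i => (hconv i).inter (convex_ball _ _),
     fun i => (hopen i).inter isOpen_ball, ?_⟩,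
    fun i => Set.inter_subset_right⟩
  ext σ
  constructor
  · rintro ⟨p, hp⟩
    by_cases hpb : p ∈ ball (0 : Euc d) R
    · rw [← hcode]
      exact ⟨p, fun i => by rw [← hp i]; simp [Set.mem_inter_iff, hpb]⟩
    · have : σ = ∅ := by
        ext i
        simp only [Finset.notMem_empty, iff_false]
        intro hi
        exact hpb ((hp i).mpr hi).2
      rw [this]; exact h0
  · intro hσ
    have hσ' : σ ∈ codeOf U := by rw [hcode]; exact hσ
    have hwσ : w σ = hσ'.choose := by rw [hw]; exact dif_pos hσ'
    have hspec := hσ'.choose_spec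
    have hb : hσ'.choose ∈ ball (0 : Euc d) R := by rw [← hwσ]; exact hball σ
    refine ⟨hσ'.choose, fun i => ?_⟩
    constructor
    · rintro ⟨h1, -⟩
      exact (hspec i).mp h1
    · intro hi
      exact ⟨(hspec i).mpr hi, hb⟩

lemma codeOf_translate (V : Fin m → Set (Euc d)) (t : Euc d) :
    codeOf (fun j => (fun x => x + t) ⁻¹' V j) = codeOf V := by
  ext σ
  constructor
  · rintro ⟨p, hp⟩
    exact ⟨p + t, fun j => hp j⟩
  · rintro ⟨p, hp⟩
    refine ⟨p - t, fun j => ?_⟩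
    simp only [Set.mem_preimage, sub_add_cancel]
    exact hp j

/-- Glue two families of sets into one family indexed by `Fin (n + m)`. -/
def glue (U : Fin n → Set (Euc d)) (V : Fin m → Set (Euc d)) : Fin (n + m) → Set (Euc d) :=
  fun k => if h : (k : ℕ) < n then U ⟨k, h⟩ else V ⟨(k : ℕ) - n, by have := k.isLt; omega⟩

lemma glue_eq (U : Fin n → Set (Euc d)) (V : Fin m → Set (Euc d)) (k : Fin (n + m)) :
    (∃ i : Fin n, k = finLeftEmb n m i ∧ glue U V k = U i) ∨
    (∃ j : Fin m, k = finRightEmb n m j ∧ glue U V k = V j) := by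
  by_cases h : (k : ℕ) < n
  · exact Or.inl ⟨⟨k, h⟩, Fin.ext rfl, by simp only [glue]; rw [dif_pos h]⟩
  · refine Or.inr ⟨⟨(k : ℕ) - n, by have := k.isLt; omega⟩, Fin.ext ?_, ?_⟩
    · show (k : ℕ) = n + ((k : ℕ) - n)
      omega
    · simp only [glue]; rw [dif_neg h]

lemma glue_left (U : Fin n → Set (Euc d)) (V : Fin m → Set (Euc d)) (i : Fin n) :
    glue U V (finLeftEmb n m i) = U i := by
  rcases glue_eq U V (finLeftEmb n m i) with ⟨i', hi', hk⟩ | ⟨j, hj, hk⟩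
  · rw [hk]
    exact congrArg U ((finLeftEmb n m).injective hi'.symm)
  · exfalso
    have := congrArg Fin.val hj
    simp only [finLeftEmb, finRightEmb, Function.Embedding.coeFn_mk, DFunLike.coe] at this
    have := i.isLt
    omega

lemma glue_right (U : Fin n → Set (Euc d)) (V : Fin m → Set (Euc d)) (j : Fin m) :
    glue U V (finRightEmb n m j) = V j := by
  rcases glue_eq U V (finRightEmb n m j) with ⟨i, hi, hk⟩ | ⟨j', hj', hk⟩
  · exfalso
    have := congrArg Fin.val hi
    simp only [finLeftEmb, finRightEmb, Function.Embedding.coeFn_mk, DFunLike.coe] at this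
    have := i.isLt
    omega
  · rw [hk]
    exact congrArg V ((finRightEmb n m).injective hj'.symm)

lemma codeOf_glue {C : Set (Finset (Fin n))} {D : Set (Finset (Fin m))}
    (h0C : ∅ ∈ C)
    {U : Fin n → Set (Euc d)} {V : Fin m → Set (Euc d)}
    (hU : codeOf U = C) (hV : codeOf V = D)
    {A B : Set (Euc d)} (hUA : ∀ i, U i ⊆ A) (hVB : ∀ j, V j ⊆ B)
    (hAB : ∀ p, p ∈ A → p ∉ B) {q : Euc d} (hqA : q ∉ A) (hqB : q ∉ B) :
    codeOf (glue U V) = codeSum C D := by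
  classical
  ext τ
  simp only [codeSum, Set.mem_union, Set.mem_setOf_eq]
  constructor
  · rintro ⟨p, hp⟩
    by_cases hpA : p ∈ A
    · have hpnV : ∀ j, p ∉ V j := fun j hj => hAB p hpA (hVB j hj)
      left
      refine ⟨Finset.univ.filter (fun i => finLeftEmb n m i ∈ τ), ?_, ?_⟩
      · rw [← hU]
        refine ⟨p, fun i => ?_⟩
        rw [← glue_left U V i, hp (finLeftEmb n m i)]
        simp
      · ext k
        rcases glue_eq U V k with ⟨i, rfl, hk⟩ | ⟨j, rfl, hk⟩
        · rw [Finset.mem_map']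
          simp only [Finset.mem_filter, Finset.mem_univ, true_and]
        · constructor
          · intro hkτ
            exact absurd ((hp _).mpr hkτ) (by rw [hk]; exact hpnV j)
          · intro hmem
            obtain ⟨i, -, hi⟩ := Finset.mem_map.mp hmem
            have h1 := congrArg Fin.val hi
            simp only [finLeftEmb, finRightEmb, Function.Embedding.coeFn_mk, DFunLike.coe] at h1
            have h2 := i.isLt
            omega
    · have hpnU : ∀ i, p ∉ U i := fun i hi => hpA (hUA i hi)
      right
      refine ⟨Finset.univ.filter (fun j => finRightEmb n m j ∈ τ), ?_, ?_⟩
      · rw [← hV]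
        refine ⟨p, fun j => ?_⟩
        rw [← glue_right U V j, hp (finRightEmb n m j)]
        simp
      · ext k
        rcases glue_eq U V k with ⟨i, rfl, hk⟩ | ⟨j, rfl, hk⟩
        · constructor
          · intro hkτ
            exact absurd ((hp _).mpr hkτ) (by rw [hk]; exact hpnU i)
          · intro hmem
            obtain ⟨j, -, hj⟩ := Finset.mem_map.mp hmem
            have h1 := congrArg Fin.val hj
            simp only [finLeftEmb, finRightEmb, Function.Embedding.coeFn_mk, DFunLike.coe] at h1
            have h2 := i.isLt
            omega
        · rw [Finset.mem_map']
          simp only [Finset.mem_filter, Finset.mem_univ, true_and]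
  · rintro (⟨σ, hσ, rfl⟩ | ⟨σ, hσ, rfl⟩)
    · rw [← hU] at hσ
      obtain ⟨p, hp⟩ := hσ
      rcases σ.eq_empty_or_nonempty with rfl | ⟨i0, hi0⟩
      · refine ⟨q, fun k => ?_⟩
        simp only [Finset.map_empty, Finset.notMem_empty, iff_false]
        rcases glue_eq U V k with ⟨i, -, hk⟩ | ⟨j, -, hk⟩
        · rw [hk]; exact fun h => hqA (hUA i h)
        · rw [hk]; exact fun h => hqB (hVB j h)
      · have hpA : p ∈ A := hUA i0 ((hp i0).mpr hi0)
        have hpnV : ∀ j, p ∉ V j := fun j hj => hAB p hpA (hVB j hj)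
        refine ⟨p, fun k => ?_⟩
        rcases glue_eq U V k with ⟨i, rfl, hk⟩ | ⟨j, rfl, hk⟩
        · rw [hk, Finset.mem_map']
          exact hp i
        · rw [hk]
          constructor
          · exact fun h => absurd h (hpnV j)
          · intro hmem
            obtain ⟨i, -, hi⟩ := Finset.mem_map.mp hmem
            have h1 := congrArg Fin.val hi
            simp only [finLeftEmb, finRightEmb, Function.Embedding.coeFn_mk, DFunLike.coe] at h1
            have h2 := i.isLt
            omega
    · rw [← hV] at hσ
      obtain ⟨p, hp⟩ := hσ
      rcases σ.eq_empty_or_nonempty with rfl | ⟨j0, hj0⟩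
      · refine ⟨q, fun k => ?_⟩
        simp only [Finset.map_empty, Finset.notMem_empty, iff_false]
        rcases glue_eq U V k with ⟨i, -, hk⟩ | ⟨j, -, hk⟩
        · rw [hk]; exact fun h => hqA (hUA i h)
        · rw [hk]; exact fun h => hqB (hVB j h)
      · have hpB : p ∈ B := hVB j0 ((hp j0).mpr hj0)
        have hpnU : ∀ i, p ∉ U i := fun i hi => hAB p (hUA i hi) hpB
        refine ⟨p, fun k => ?_⟩
        rcases glue_eq U V k with ⟨i, rfl, hk⟩ | ⟨j, rfl, hk⟩
        · rw [hk]
          constructor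
          · exact fun h => absurd h (hpnU i)
          · intro hmem
            obtain ⟨j, -, hj⟩ := Finset.mem_map.mp hmem
            have h1 := congrArg Fin.val hj
            simp only [finLeftEmb, finRightEmb, Function.Embedding.coeFn_mk, DFunLike.coe] at h1
            have h2 := j.isLt
            omega
        · rw [hk, Finset.mem_map']
          exact hp j

lemma restrict_left {C : Set (Finset (Fin n))} {D : Set (Finset (Fin m))} {d : ℕ}
    (h0C : ∅ ∈ C) (h : HasOpenReal (codeSum C D) d) : HasOpenReal C d := by
  classical
  obtain ⟨W, hconv, hopen, hcode⟩ := h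
  refine ⟨fun i => W (finLeftEmb n m i), fun i => hconv _, fun i => hopen _, ?_⟩
  ext σ
  constructor
  · rintro ⟨p, hp⟩
    set τ : Finset (Fin (n + m)) := Finset.univ.filter (fun k => p ∈ W k) with hτ
    have hτmem : τ ∈ codeSum C D := by
      rw [← hcode]
      exact ⟨p, fun k => by simp [hτ]⟩
    simp only [codeSum, Set.mem_union, Set.mem_setOf_eq] at hτmem
    rcases hτmem with ⟨σ', hσ', hmap⟩ | ⟨σ', hσ', hmap⟩
    · have hss : σ = σ' := by
        ext i
        rw [← hp i]
        have h1 : p ∈ W (finLeftEmb n m i) ↔ finLeftEmb n m i ∈ τ := by simp [hτ]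
        rw [h1, hmap, Finset.mem_map']
      rw [hss]; exact hσ'
    · have hss : σ = ∅ := by
        ext i
        simp only [Finset.notMem_empty, iff_false]
        rw [← hp i]
        intro hWi
        have hmem : finLeftEmb n m i ∈ τ := by simp [hτ, hWi]
        rw [hmap] at hmem
        obtain ⟨j, -, hj⟩ := Finset.mem_map.mp hmem
        have h1 := congrArg Fin.val hj
        simp only [finLeftEmb, finRightEmb, Function.Embedding.coeFn_mk, DFunLike.coe] at h1
        have h2 := i.isLt
        omega
      rw [hss]; exact h0C
  · intro hσ
    have hmem : σ.map (finLeftEmb n m) ∈ codeOf W := by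
      rw [hcode]
      exact Or.inl ⟨σ, hσ, rfl⟩
    obtain ⟨p, hp⟩ := hmem
    refine ⟨p, fun i => ?_⟩
    rw [hp (finLeftEmb n m i), Finset.mem_map']

lemma restrict_right {C : Set (Finset (Fin n))} {D : Set (Finset (Fin m))} {d : ℕ}
    (h0D : ∅ ∈ D) (h : HasOpenReal (codeSum C D) d) : HasOpenReal D d := by
  classical
  obtain ⟨W, hconv, hopen, hcode⟩ := h
  refine ⟨fun j => W (finRightEmb n m j), fun j => hconv _, fun j => hopen _, ?_⟩
  ext σ
  constructor
  · rintro ⟨p, hp⟩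
    set τ : Finset (Fin (n + m)) := Finset.univ.filter (fun k => p ∈ W k) with hτ
    have hτmem : τ ∈ codeSum C D := by
      rw [← hcode]
      exact ⟨p, fun k => by simp [hτ]⟩
    simp only [codeSum, Set.mem_union, Set.mem_setOf_eq] at hτmem
    rcases hτmem with ⟨σ', hσ', hmap⟩ | ⟨σ', hσ', hmap⟩
    · have hss : σ = ∅ := by
        ext j
        simp only [Finset.notMem_empty, iff_false]
        rw [← hp j]
        intro hWj
        have hmem : finRightEmb n m j ∈ τ := by simp [hτ, hWj]
        rw [hmap] at hmem
        obtain ⟨i, -, hi⟩ := Finset.mem_map.mp hmem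
        have h1 := congrArg Fin.val hi
        simp only [finLeftEmb, finRightEmb, Function.Embedding.coeFn_mk, DFunLike.coe] at h1
        have h2 := i.isLt
        omega
      rw [hss]; exact h0D
    · have hss : σ = σ' := by
        ext j
        rw [← hp j]
        have h1 : p ∈ W (finRightEmb n m j) ↔ finRightEmb n m j ∈ τ := by simp [hτ]
        rw [h1, hmap, Finset.mem_map']
      rw [hss]; exact hσ'
  · intro hσ
    have hmem : σ.map (finRightEmb n m) ∈ codeOf W := by
      rw [hcode]
      exact Or.inr ⟨σ, hσ, rfl⟩
    obtain ⟨p, hp⟩ := hmem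
    refine ⟨p, fun j => ?_⟩
    rw [hp (finRightEmb n m j), Finset.mem_map']

lemma codeSum_of_both {C : Set (Finset (Fin n))} {D : Set (Finset (Fin m))}
    (h0C : ∅ ∈ C) (h0D : ∅ ∈ D) {d : ℕ}
    (hCd : HasOpenReal C d) (hDd : HasOpenReal D d) :
    HasOpenReal (codeSum C D) d := by
  rcases Nat.eq_zero_or_pos d with rfl | hd
  · rw [eq_singleton_of_dim_zero hCd h0C, eq_singleton_of_dim_zero hDd h0D,
      codeSum_singleton]
    exact hasOpenReal_singleton_empty _ _
  · obtain ⟨U0, hU0⟩ := hCd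
    obtain ⟨R1, hR1, U, hUreal, hUball⟩ := exists_bounded_real h0C hU0
    obtain ⟨V0, hV0⟩ := hDd
    obtain ⟨R2, hR2, V, hVreal, hVball⟩ := exists_bounded_real h0D hV0
    set R : ℝ := max R1 R2 with hRdef
    have hRpos : (0 : ℝ) < R := lt_of_lt_of_le hR1 (le_max_left _ _)
    set t : Euc d := EuclideanSpace.single (⟨0, hd⟩ : Fin d) (2 * R + 1) with ht
    have hnt : ‖t‖ = 2 * R + 1 := by
      rw [ht, EuclideanSpace.norm_single, Real.norm_eq_abs, abs_of_pos (by linarith)]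
    set V' : Fin m → Set (Euc d) := fun j => (fun x => x + t) ⁻¹' V j with hV'
    have hV'conv : ∀ j, Convex ℝ (V' j) := fun j => (hVreal.1 j).translate_preimage_left t
    have hV'open : ∀ j, IsOpen (V' j) := fun j =>
      (hVreal.2.1 j).preimage (continuous_add_right t)
    have hV'code : codeOf V' = D := by
      rw [hV', codeOf_translate, hVreal.2.2]
    have hUA : ∀ i, U i ⊆ ball (0 : Euc d) R := fun i =>
      (hUball i).trans (ball_subset_ball (le_max_left _ _))
    have hVB : ∀ j, V' j ⊆ ball (-t) R := by
      intro j x hx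
      have h1 : x + t ∈ ball (0 : Euc d) R2 := hVball j hx
      rw [mem_ball_zero_iff] at h1
      rw [mem_ball, dist_eq_norm, sub_neg_eq_add]
      exact lt_of_lt_of_le h1 (le_max_right _ _)
    have hAB : ∀ p : Euc d, p ∈ ball (0 : Euc d) R → p ∉ ball (-t) R := by
      intro p hp1 hp2
      rw [mem_ball_zero_iff] at hp1
      rw [mem_ball, dist_eq_norm, sub_neg_eq_add] at hp2
      have h3 : ‖t‖ ≤ ‖p + t‖ + ‖p‖ := by
        calc ‖t‖ = ‖(p + t) - p‖ := by rw [add_sub_cancel_left]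
          _ ≤ ‖p + t‖ + ‖p‖ := norm_sub_le _ _
      rw [hnt] at h3
      linarith
    have hqA : t ∉ ball (0 : Euc d) R := by
      rw [mem_ball_zero_iff, hnt]
      intro h
      linarith
    have hqB : t ∉ ball (-t) R := by
      rw [mem_ball, dist_eq_norm, sub_neg_eq_add]
      have h1 : t + t = (2 : ℝ) • t := (two_smul ℝ t).symm
      rw [h1, norm_smul, Real.norm_ofNat, hnt]
      intro h
      linarith
    refine ⟨glue U V', ?_, ?_, ?_⟩
    · intro k
      rcases glue_eq U V' k with ⟨i, -, hk⟩ | ⟨j, -, hk⟩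
      · rw [hk]; exact hUreal.1 i
      · rw [hk]; exact hV'conv j
    · intro k
      rcases glue_eq U V' k with ⟨i, -, hk⟩ | ⟨j, -, hk⟩
      · rw [hk]; exact hUreal.2.1 i
      · rw [hk]; exact hV'open j
    · exact codeOf_glue h0C hUreal.2.2 hV'code hUA hVB hAB hqA hqB

end CodeSumAux

/-- `C ⊔ D` has an open convex realization in `ℝ^d` iff both `C` and `D` do;
consequently `odim (C ⊔ D) = max (odim C) (odim D)`. -/
theorem codeSum_open {n m : ℕ} (C : Set (Finset (Fin n))) (D : Set (Finset (Fin m)))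
    (hC : ∅ ∈ C) (hD : ∅ ∈ D) :
    (∀ d : ℕ, 1 ≤ d → (HasOpenReal (codeSum C D) d ↔ HasOpenReal C d ∧ HasOpenReal D d)) ∧
    odim (codeSum C D) = max (odim C) (odim D) := by
  classical
  have fwd : ∀ d : ℕ, HasOpenReal (codeSum C D) d → HasOpenReal C d ∧ HasOpenReal D d :=
    fun d h => ⟨CodeSumAux.restrict_left hC h, CodeSumAux.restrict_right hD h⟩
  have bwd : ∀ d : ℕ, HasOpenReal C d → HasOpenReal D d → HasOpenReal (codeSum C D) d :=
    fun d h1 h2 => CodeSumAux.codeSum_of_both hC hD h1 h2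
  refine ⟨fun d _ => ⟨fwd d, fun h => bwd d h.1 h.2⟩, ?_⟩
  have hsubC : {e : ℕ∞ | ∃ d : ℕ, e = d ∧ HasOpenReal (codeSum C D) d} ⊆
      {e : ℕ∞ | ∃ d : ℕ, e = d ∧ HasOpenReal C d} := by
    rintro e ⟨d, rfl, h⟩
    exact ⟨d, rfl, (fwd d h).1⟩
  have hsubD : {e : ℕ∞ | ∃ d : ℕ, e = d ∧ HasOpenReal (codeSum C D) d} ⊆
      {e : ℕ∞ | ∃ d : ℕ, e = d ∧ HasOpenReal D d} := by
    rintro e ⟨d, rfl, h⟩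
    exact ⟨d, rfl, (fwd d h).2⟩
  have h1 : odim C ≤ odim (codeSum C D) := sInf_le_sInf hsubC
  have h2 : odim D ≤ odim (codeSum C D) := sInf_le_sInf hsubD
  refine le_antisymm ?_ (max_le h1 h2)
  by_cases hCne : ({e : ℕ∞ | ∃ d : ℕ, e = d ∧ HasOpenReal C d}).Nonempty
  · by_cases hDne : ({e : ℕ∞ | ∃ d : ℕ, e = d ∧ HasOpenReal D d}).Nonempty
    · have hCm : odim C ∈ {e : ℕ∞ | ∃ d : ℕ, e = d ∧ HasOpenReal C d} := csInf_mem hCne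
      have hDm : odim D ∈ {e : ℕ∞ | ∃ d : ℕ, e = d ∧ HasOpenReal D d} := csInf_mem hDne
      obtain ⟨d1, he1, hO1⟩ := hCm
      obtain ⟨d2, he2, hO2⟩ := hDm
      have hO1' : HasOpenReal C (max d1 d2) :=
        CodeSumAux.hasOpenReal_mono (le_max_left d1 d2) hO1
      have hO2' : HasOpenReal D (max d1 d2) :=
        CodeSumAux.hasOpenReal_mono (le_max_right d1 d2) hO2
      have hsum : HasOpenReal (codeSum C D) (max d1 d2) := bwd _ hO1' hO2'
      have hle : odim (codeSum C D) ≤ ((max d1 d2 : ℕ) : ℕ∞) :=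
        sInf_le ⟨max d1 d2, rfl, hsum⟩
      calc odim (codeSum C D) ≤ ((max d1 d2 : ℕ) : ℕ∞) := hle
        _ = max (d1 : ℕ∞) (d2 : ℕ∞) := by
            exact_mod_cast (Nat.mono_cast (α := ℕ∞)).map_max
        _ = max (odim C) (odim D) := by rw [he1, he2]
    · have hDtop : odim D = ⊤ := by
        unfold odim
        rw [Set.not_nonempty_iff_eq_empty.mp hDne, sInf_empty]
      rw [hDtop, max_eq_right le_top]
      exact le_top
  · have hCtop : odim C = ⊤ := by
      unfold odim
      rw [Set.not_nonempty_iff_eq_empty.mp hCne, sInf_empty]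
    rw [hCtop, max_eq_left le_top]
    exact le_top

end
end

section
/- Let C be a code on n neurons and D a code on m neurons, and let C ⊔ D be the code on n + m neurons whose codewords are the codewords of C (on the first n indices) together with the codewords of D (shifted to the last m indices). Then for every d ≥ 1, C ⊔ D has a closed convex realization in ℝ^d if and only if both C and D have closed convex realizations in ℝ^d. Consequently cdim(C ⊔ D) = max{cdim(C), cdim(D)}. -/
open Set

noncomputable section

/-! ### Auxiliary lemmas -/

open Classical in
/-- The codeword of a point `p` with respect to a collection `X`. -/
noncomputable def cw {n d : ℕ} (X : Fin n → Set (Euc d)) (p : Euc d) : Finset (Fin n) :=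
  Finset.univ.filter (fun i => p ∈ X i)

lemma mem_cw {n d : ℕ} (X : Fin n → Set (Euc d)) (p : Euc d) (i : Fin n) :
    i ∈ cw X p ↔ p ∈ X i := by
  simp [cw]

lemma cw_mem_codeOf {n d : ℕ} (X : Fin n → Set (Euc d)) (p : Euc d) :
    cw X p ∈ codeOf X := ⟨p, fun i => (mem_cw X p i).symm⟩

lemma right_not_mem_map_left {n m : ℕ} (j : Fin m) (σ : Finset (Fin n)) :
    finRightEmb n m j ∉ σ.map (finLeftEmb n m) := by
  intro h
  obtain ⟨a, -, ha⟩ := Finset.mem_map.mp h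
  have h1 : (a : ℕ) = n + (j : ℕ) := congrArg Fin.val ha
  have h2 := a.isLt
  omega

lemma left_not_mem_map_right {n m : ℕ} (i : Fin n) (σ : Finset (Fin m)) :
    finLeftEmb n m i ∉ σ.map (finRightEmb n m) := by
  intro h
  obtain ⟨a, -, ha⟩ := Finset.mem_map.mp h
  have h1 : (n + (a : ℕ) : ℕ) = (i : ℕ) := congrArg Fin.val ha
  have h2 := i.isLt
  omega

lemma isClosedReal_left {n m d : ℕ} {C : Set (Finset (Fin n))} {D : Set (Finset (Fin m))}
    (hC : ∅ ∈ C) {Z : Fin (n+m) → Set (Euc d)} (hZ : IsClosedReal (codeSum C D) Z) :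
    IsClosedReal C (fun i => Z (finLeftEmb n m i)) := by
  obtain ⟨hconv, hcl, hcode⟩ := hZ
  refine ⟨fun i => hconv _, fun i => hcl _, ?_⟩
  ext σ
  constructor
  · rintro ⟨p, hp⟩
    have hτ : cw Z p ∈ codeSum C D := hcode ▸ cw_mem_codeOf Z p
    rcases hτ with ⟨σ', hσ', h⟩ | ⟨σ', hσ', h⟩
    · have : σ = σ' := by
        ext i
        rw [← hp i, ← mem_cw Z p (finLeftEmb n m i), h, Finset.mem_map']
      rwa [this]
    · have : σ = ∅ := by
        apply Finset.eq_empty_of_forall_notMem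
        intro i hi
        have := (mem_cw Z p (finLeftEmb n m i)).mpr ((hp i).mpr hi)
        rw [h] at this
        exact left_not_mem_map_right i σ' this
      rwa [this]
  · intro hσ
    have : σ.map (finLeftEmb n m) ∈ codeOf Z := by
      rw [hcode]; exact Or.inl ⟨σ, hσ, rfl⟩
    obtain ⟨p, hp⟩ := this
    exact ⟨p, fun i => by rw [hp (finLeftEmb n m i), Finset.mem_map']⟩

lemma isClosedReal_right {n m d : ℕ} {C : Set (Finset (Fin n))} {D : Set (Finset (Fin m))}
    (hD : ∅ ∈ D) {Z : Fin (n+m) → Set (Euc d)} (hZ : IsClosedReal (codeSum C D) Z) :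
    IsClosedReal D (fun j => Z (finRightEmb n m j)) := by
  obtain ⟨hconv, hcl, hcode⟩ := hZ
  refine ⟨fun j => hconv _, fun j => hcl _, ?_⟩
  ext σ
  constructor
  · rintro ⟨p, hp⟩
    have hτ : cw Z p ∈ codeSum C D := hcode ▸ cw_mem_codeOf Z p
    rcases hτ with ⟨σ', hσ', h⟩ | ⟨σ', hσ', h⟩
    · have : σ = ∅ := by
        apply Finset.eq_empty_of_forall_notMem
        intro j hj
        have := (mem_cw Z p (finRightEmb n m j)).mpr ((hp j).mpr hj)
        rw [h] at this
        exact right_not_mem_map_left j σ' this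
      rwa [this]
    · have : σ = σ' := by
        ext j
        rw [← hp j, ← mem_cw Z p (finRightEmb n m j), h, Finset.mem_map']
      rwa [this]
  · intro hσ
    have : σ.map (finRightEmb n m) ∈ codeOf Z := by
      rw [hcode]; exact Or.inr ⟨σ, hσ, rfl⟩
    obtain ⟨p, hp⟩ := this
    exact ⟨p, fun j => by rw [hp (finRightEmb n m j), Finset.mem_map']⟩

lemma exists_bounded {n d : ℕ} {C : Set (Finset (Fin n))} (hC : ∅ ∈ C)
    (h : HasClosedReal C d) :
    ∃ (X : Fin n → Set (Euc d)) (R : ℝ), 0 ≤ R ∧ IsClosedReal C X ∧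
      ∀ i, X i ⊆ Metric.closedBall 0 R := by
  obtain ⟨X, hconv, hcl, hcode⟩ := h
  have hw : ∀ σ ∈ C, ∃ p : Euc d, ∀ i, p ∈ X i ↔ i ∈ σ := by
    intro σ hσ; rw [← hcode] at hσ; exact hσ
  choose f hf using hw
  have hfin : (Set.range (fun σ : C => f σ.1 σ.2)).Finite := Set.finite_range _
  obtain ⟨R₀, hR₀⟩ := hfin.isBounded.subset_closedBall 0
  refine ⟨fun i => X i ∩ Metric.closedBall 0 (max R₀ 0), max R₀ 0, le_max_right _ _,
    ⟨fun i => (hconv i).inter (convex_closedBall 0 _),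
     fun i => (hcl i).inter Metric.isClosed_closedBall, ?_⟩, fun i => inter_subset_right⟩
  ext σ
  constructor
  · rintro ⟨p, hp⟩
    by_cases hb : p ∈ Metric.closedBall (0 : Euc d) (max R₀ 0)
    · rw [← hcode]
      exact ⟨p, fun i => by rw [← hp i]; exact ⟨fun h' => ⟨h', hb⟩, fun h' => h'.1⟩⟩
    · have : σ = ∅ :=
        Finset.eq_empty_of_forall_notMem fun i hi => hb ((hp i).mpr hi).2
      rwa [this]
  · intro hσ
    have hfb : f σ hσ ∈ Metric.closedBall (0 : Euc d) (max R₀ 0) :=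
      Metric.closedBall_subset_closedBall (le_max_left _ _) (hR₀ ⟨⟨σ, hσ⟩, rfl⟩)
    exact ⟨f σ hσ, fun i =>
      ⟨fun h' => (hf σ hσ i).mp h'.1, fun h' => ⟨(hf σ hσ i).mpr h', hfb⟩⟩⟩

lemma single_empty_real {n d : ℕ} : HasClosedReal ({∅} : Set (Finset (Fin n))) d := by
  refine ⟨fun _ => ∅, fun i => convex_empty, fun i => isClosed_empty, ?_⟩
  ext σ
  simp only [Set.mem_singleton_iff]
  constructor
  · rintro ⟨p, hp⟩
    exact Finset.eq_empty_of_forall_notMem fun i hi => (hp i).mpr hi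
  · rintro rfl
    exact ⟨0, by simp⟩

lemma closedReal_zero {n : ℕ} {C : Set (Finset (Fin n))} (hC : ∅ ∈ C)
    (h : HasClosedReal C 0) : C = {∅} := by
  obtain ⟨X, -, -, hcode⟩ := h
  ext σ
  simp only [Set.mem_singleton_iff]
  constructor
  · intro hσ
    rw [← hcode] at hσ hC
    obtain ⟨p, hp⟩ := hσ
    obtain ⟨q, hq⟩ := hC
    have hpq : p = q := Subsingleton.elim p q
    ext i
    rw [← hp i, hpq, hq i]
  · rintro rfl; exact hC

lemma codeSum_single_empty {n m : ℕ} :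
    codeSum ({∅} : Set (Finset (Fin n))) ({∅} : Set (Finset (Fin m))) = {∅} := by
  ext τ
  constructor
  · rintro (⟨σ, hσ, rfl⟩ | ⟨σ, hσ, rfl⟩) <;>
      simp_all
  · rintro rfl
    exact Or.inl ⟨∅, rfl, by simp⟩

lemma hasClosedReal_mono {n : ℕ} {C : Set (Finset (Fin n))} {d d' : ℕ} (h : d ≤ d')
    (hr : HasClosedReal C d) : HasClosedReal C d' := by
  obtain ⟨X, hconv, hcl, hcode⟩ := hr
  let L : Euc d' →ₗ[ℝ] Euc d :=
    { toFun := fun x => WithLp.toLp 2 (fun i => x (Fin.castLE h i))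
      map_add' := fun _ _ => rfl
      map_smul' := fun _ _ => rfl }
  have hLcont : Continuous L := L.continuous_of_finiteDimensional
  refine ⟨fun i => L ⁻¹' X i, fun i => (hconv i).linear_preimage L,
    fun i => (hcl i).preimage hLcont, ?_⟩
  rw [← hcode]
  ext σ
  constructor
  · rintro ⟨p, hp⟩; exact ⟨L p, hp⟩
  · rintro ⟨q, hq⟩
    refine ⟨WithLp.toLp 2 (fun k => if hk : (k : ℕ) < d then q ⟨k, hk⟩ else 0 : Fin d' → ℝ), fun i => ?_⟩
    have hLq : L (WithLp.toLp 2 (fun k => if hk : (k : ℕ) < d then q ⟨k, hk⟩ else 0 : Fin d' → ℝ)) = q := by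
      ext i
      show (if hk : ((Fin.castLE h i : Fin d') : ℕ) < d then q ⟨_, hk⟩ else 0) = q i
      rw [dif_pos (show ((Fin.castLE h i : Fin d') : ℕ) < d from i.2)]
      exact congrArg q (Fin.ext rfl)
    rw [Set.mem_preimage, hLq]
    exact hq i

lemma combine {n m d : ℕ} {C : Set (Finset (Fin n))} {D : Set (Finset (Fin m))}
    (hC : ∅ ∈ C) (hD : ∅ ∈ D) (hd : 1 ≤ d)
    (hCr : HasClosedReal C d) (hDr : HasClosedReal D d) :
    HasClosedReal (codeSum C D) d := by
  obtain ⟨X, R, hR, ⟨hXc, hXcl, hXcode⟩, hXb⟩ := exists_bounded hC hCr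
  obtain ⟨Y, R', hR', ⟨hYc, hYcl, hYcode⟩, hYb⟩ := exists_bounded hD hDr
  set e : Fin d := ⟨0, hd⟩ with he
  set v : Euc d := EuclideanSpace.single e (R + R' + 1) with hv
  set T : Euc d → Euc d := fun p => p - v with hT
  set Z : Fin (n+m) → Set (Euc d) := fun k =>
    if hk : (k : ℕ) < n then X ⟨k, hk⟩ else T ⁻¹' Y ⟨(k : ℕ) - n, by omega⟩ with hZ
  have hZleft : ∀ i : Fin n, Z (finLeftEmb n m i) = X i := by
    intro i
    have hlt : ((finLeftEmb n m i : Fin (n+m)) : ℕ) < n := i.2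
    simp only [hZ]
    rw [dif_pos hlt]
    exact congrArg X (Fin.ext rfl)
  have hZright : ∀ j : Fin m, Z (finRightEmb n m j) = T ⁻¹' Y j := by
    intro j
    have hlt : ¬ ((finRightEmb n m j : Fin (n+m)) : ℕ) < n := by
      show ¬ n + (j : ℕ) < n; omega
    simp only [hZ]
    rw [dif_neg hlt]
    refine congrArg (fun s => T ⁻¹' s) (congrArg Y (Fin.ext ?_))
    show n + (j : ℕ) - n = (j : ℕ); omega
  have hnormv : ‖v‖ = R + R' + 1 := by
    rw [hv, EuclideanSpace.norm_single, Real.norm_eq_abs, abs_of_nonneg (by linarith)]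
  have hdisj : ∀ (p : Euc d) (i : Fin n) (j : Fin m), p ∈ X i → p ∈ T ⁻¹' Y j → False := by
    intro p i j hpi hpj
    have h1 : ‖p‖ ≤ R := by
      have := hXb i hpi; rwa [Metric.mem_closedBall, dist_zero_right] at this
    have h2 : ‖p - v‖ ≤ R' := by
      have := hYb j hpj; rwa [Metric.mem_closedBall, dist_zero_right] at this
    have h3 : ‖v‖ ≤ ‖p‖ + ‖p - v‖ := by
      simpa [sub_sub_cancel] using norm_sub_le p (p - v)
    rw [hnormv] at h3
    linarith
  set w : Euc d := -v with hw
  have hwX : ∀ i, w ∉ X i := by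
    intro i hwi
    have h1 : ‖w‖ ≤ R := by
      have := hXb i hwi; rwa [Metric.mem_closedBall, dist_zero_right] at this
    rw [hw, norm_neg, hnormv] at h1
    linarith
  have hwY : ∀ j, w ∉ T ⁻¹' Y j := by
    intro j hwj
    have h2 : ‖w - v‖ ≤ R' := by
      have := hYb j hwj; rwa [Metric.mem_closedBall, dist_zero_right] at this
    have hcalc : ‖w - v‖ = 2 * ‖v‖ := by
      have hwv : w - v = -((2 : ℝ) • v) := by rw [two_smul, hw]; abel
      rw [hwv, norm_neg, norm_smul]; simp
    rw [hcalc, hnormv] at h2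
    linarith
  refine ⟨Z, fun k => ?_, fun k => ?_, ?_⟩
  · simp only [hZ]
    split
    · exact hXc _
    · simpa [hT, sub_eq_add_neg] using (hYc _).translate_preimage_left (-v)
  · simp only [hZ]
    split
    · exact hXcl _
    · exact (hYcl _).preimage (continuous_id.sub continuous_const)
  · ext τ
    constructor
    · rintro ⟨p, hp⟩
      set σC : Finset (Fin n) := cw X p with hσC
      set σD : Finset (Fin m) := cw (fun j => T ⁻¹' Y j) p with hσD
      by_cases hDe : σD = ∅
      · left
        refine ⟨σC, by rw [← hXcode]; exact cw_mem_codeOf X p, ?_⟩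
        ext k
        rw [← hp k]
        by_cases hk : (k : ℕ) < n
        · rw [show k = finLeftEmb n m ⟨k, hk⟩ from Fin.ext rfl, hZleft, Finset.mem_map']
          exact (mem_cw X p _).symm
        · rw [show k = finRightEmb n m ⟨(k : ℕ) - n, by omega⟩ from
            Fin.ext (by show (k : ℕ) = n + ((k : ℕ) - n); omega), hZright]
          refine iff_of_false (fun h' => ?_) (right_not_mem_map_left _ _)
          have hmem := (mem_cw (fun j => T ⁻¹' Y j) p _).mpr h'
          rw [← hσD, hDe] at hmem
          exact Finset.notMem_empty _ hmem
      · have hCe : σC = ∅ := by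
          by_contra hne
          obtain ⟨i, hi⟩ := Finset.nonempty_iff_ne_empty.mpr hne
          obtain ⟨j, hj⟩ := Finset.nonempty_iff_ne_empty.mpr hDe
          exact hdisj p i j ((mem_cw X p i).mp hi) ((mem_cw (fun j => T ⁻¹' Y j) p j).mp hj)
        right
        refine ⟨σD, by rw [← hYcode]; exact ⟨T p, fun j =>
          ((mem_cw (fun j' => T ⁻¹' Y j') p j).symm : p ∈ T ⁻¹' Y j ↔ j ∈ σD)⟩, ?_⟩
        ext k
        rw [← hp k]
        by_cases hk : (k : ℕ) < n
        · rw [show k = finLeftEmb n m ⟨k, hk⟩ from Fin.ext rfl, hZleft]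
          refine iff_of_false (fun h' => ?_) (left_not_mem_map_right _ _)
          have hmem := (mem_cw X p _).mpr h'
          rw [← hσC, hCe] at hmem
          exact Finset.notMem_empty _ hmem
        · rw [show k = finRightEmb n m ⟨(k : ℕ) - n, by omega⟩ from
            Fin.ext (by show (k : ℕ) = n + ((k : ℕ) - n); omega), hZright, Finset.mem_map']
          exact (mem_cw (fun j => T ⁻¹' Y j) p _).symm
    · rintro (⟨σ, hσ, rfl⟩ | ⟨σ, hσ, rfl⟩)
      · by_cases hne : σ = ∅
        · subst hne
          refine ⟨w, fun k => ?_⟩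
          simp only [Finset.map_empty, Finset.notMem_empty, iff_false]
          by_cases hk : (k : ℕ) < n
          · rw [show k = finLeftEmb n m ⟨k, hk⟩ from Fin.ext rfl, hZleft]
            exact hwX _
          · rw [show k = finRightEmb n m ⟨(k : ℕ) - n, by omega⟩ from
              Fin.ext (by show (k : ℕ) = n + ((k : ℕ) - n); omega), hZright]
            exact hwY _
        · obtain ⟨i₀, hi₀⟩ := Finset.nonempty_iff_ne_empty.mpr hne
          have hmem : σ ∈ codeOf X := by rw [hXcode]; exact hσ
          obtain ⟨p, hp⟩ := hmem
          have hpi₀ : p ∈ X i₀ := (hp i₀).mpr hi₀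
          refine ⟨p, fun k => ?_⟩
          by_cases hk : (k : ℕ) < n
          · rw [show k = finLeftEmb n m ⟨k, hk⟩ from Fin.ext rfl, hZleft, Finset.mem_map']
            exact hp _
          · rw [show k = finRightEmb n m ⟨(k : ℕ) - n, by omega⟩ from
              Fin.ext (by show (k : ℕ) = n + ((k : ℕ) - n); omega), hZright]
            exact iff_of_false (fun h' => hdisj p i₀ _ hpi₀ h') (right_not_mem_map_left _ _)
      · by_cases hne : σ = ∅
        · subst hne
          refine ⟨w, fun k => ?_⟩
          simp only [Finset.map_empty, Finset.notMem_empty, iff_false]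
          by_cases hk : (k : ℕ) < n
          · rw [show k = finLeftEmb n m ⟨k, hk⟩ from Fin.ext rfl, hZleft]
            exact hwX _
          · rw [show k = finRightEmb n m ⟨(k : ℕ) - n, by omega⟩ from
              Fin.ext (by show (k : ℕ) = n + ((k : ℕ) - n); omega), hZright]
            exact hwY _
        · obtain ⟨j₀, hj₀⟩ := Finset.nonempty_iff_ne_empty.mpr hne
          have hmem : σ ∈ codeOf Y := by rw [hYcode]; exact hσ
          obtain ⟨q, hq⟩ := hmem
          refine ⟨q + v, fun k => ?_⟩
          have hTqv : T (q + v) = q := by rw [hT]; exact add_sub_cancel_right q v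
          have hqin : q + v ∈ T ⁻¹' Y j₀ := by
            rw [Set.mem_preimage, hTqv]; exact (hq j₀).mpr hj₀
          by_cases hk : (k : ℕ) < n
          · rw [show k = finLeftEmb n m ⟨k, hk⟩ from Fin.ext rfl, hZleft]
            exact iff_of_false (fun h' => hdisj (q + v) _ j₀ h' hqin)
              (left_not_mem_map_right _ _)
          · rw [show k = finRightEmb n m ⟨(k : ℕ) - n, by omega⟩ from
              Fin.ext (by show (k : ℕ) = n + ((k : ℕ) - n); omega), hZright, Finset.mem_map']
            show q + v ∈ T ⁻¹' Y _ ↔ _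
            rw [Set.mem_preimage, hTqv]
            exact hq _

lemma sInf_inter_max (A B : Set ℕ∞)
    (hA : ∀ e ∈ A, ∃ d : ℕ, e = d) (hB : ∀ e ∈ B, ∃ d : ℕ, e = d)
    (hAup : ∀ a b : ℕ, a ≤ b → (a : ℕ∞) ∈ A → (b : ℕ∞) ∈ A)
    (hBup : ∀ a b : ℕ, a ≤ b → (a : ℕ∞) ∈ B → (b : ℕ∞) ∈ B) :
    sInf (A ∩ B) = max (sInf A) (sInf B) := by
  apply le_antisymm
  · rcases Set.eq_empty_or_nonempty A with hAe | hAne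
    · rw [hAe, sInf_empty]; simp
    rcases Set.eq_empty_or_nonempty B with hBe | hBne
    · rw [hBe, sInf_empty]; simp
    have hma := csInf_mem hAne
    have hmb := csInf_mem hBne
    obtain ⟨a, ha⟩ := hA _ hma
    obtain ⟨b, hb⟩ := hB _ hmb
    rw [ha, hb]
    have hmax : max ((a : ℕ∞)) ((b : ℕ∞)) = ((max a b : ℕ) : ℕ∞) := by
      rcases le_total a b with h | h
      · rw [max_eq_right h, max_eq_right (by exact_mod_cast h : (a : ℕ∞) ≤ b)]
      · rw [max_eq_left h, max_eq_left (by exact_mod_cast h : (b : ℕ∞) ≤ a)]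
    rw [hmax]
    exact sInf_le ⟨hAup a _ (le_max_left _ _) (ha ▸ hma),
      hBup b _ (le_max_right _ _) (hb ▸ hmb)⟩
  · exact max_le (sInf_le_sInf inter_subset_left) (sInf_le_sInf inter_subset_right)

/-- `C ⊔ D` has a closed convex realization in `ℝ^d` iff both `C` and `D` do;
consequently `cdim (C ⊔ D) = max (cdim C) (cdim D)`. -/
theorem codeSum_closed {n m : ℕ} (C : Set (Finset (Fin n))) (D : Set (Finset (Fin m)))
    (hC : ∅ ∈ C) (hD : ∅ ∈ D) :
    (∀ d : ℕ, 1 ≤ d → (HasClosedReal (codeSum C D) d ↔ HasClosedReal C d ∧ HasClosedReal D d)) ∧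
    cdim (codeSum C D) = max (cdim C) (cdim D) := by
  have hiff : ∀ d : ℕ, HasClosedReal (codeSum C D) d ↔ HasClosedReal C d ∧ HasClosedReal D d := by
    intro d
    constructor
    · rintro ⟨Z, hZ⟩
      exact ⟨⟨_, isClosedReal_left hC hZ⟩, ⟨_, isClosedReal_right hD hZ⟩⟩
    · rintro ⟨h1, h2⟩
      rcases Nat.eq_zero_or_pos d with rfl | hd
      · rw [closedReal_zero hC h1, closedReal_zero hD h2, codeSum_single_empty]
        exact single_empty_real
      · exact combine hC hD hd h1 h2
  refine ⟨fun d _ => hiff d, ?_⟩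
  have hset : {e : ℕ∞ | ∃ d : ℕ, e = d ∧ HasClosedReal (codeSum C D) d}
      = {e : ℕ∞ | ∃ d : ℕ, e = d ∧ HasClosedReal C d}
        ∩ {e : ℕ∞ | ∃ d : ℕ, e = d ∧ HasClosedReal D d} := by
    ext x
    constructor
    · rintro ⟨d, rfl, h⟩
      obtain ⟨h1, h2⟩ := (hiff d).mp h
      exact ⟨⟨d, rfl, h1⟩, ⟨d, rfl, h2⟩⟩
    · rintro ⟨⟨d, rfl, h1⟩, ⟨d', hd', h2⟩⟩
      have hdd : d = d' := by exact_mod_cast hd'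
      subst hdd
      exact ⟨d, rfl, (hiff d).mpr ⟨h1, h2⟩⟩
  show sInf _ = max (sInf _) (sInf _)
  rw [hset]
  exact sInf_inter_max _ _
    (by rintro x ⟨d, rfl, -⟩; exact ⟨d, rfl⟩)
    (by rintro x ⟨d, rfl, -⟩; exact ⟨d, rfl⟩)
    (by rintro a b hab ⟨d, hd, h⟩
        have : a = d := by exact_mod_cast hd
        subst this
        exact ⟨b, rfl, hasClosedReal_mono hab h⟩)
    (by rintro a b hab ⟨d, hd, h⟩
        have : a = d := by exact_mod_cast hd
        subst this
        exact ⟨b, rfl, hasClosedReal_mono hab h⟩)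

end
end

section
/- For every d with 2 ≤ d < ∞, the code C_{(2,d,d)} has an open convex realization in ℝ^2. -/
open Set
set_option maxHeartbeats 1000000

noncomputable section

/-- Index of `α_i` in the base set of `C_{(2,d,d)}`. -/
def idxA (d : ℕ) (i : Fin d) : Fin (4 * d) := ⟨i.1, by have := i.2; omega⟩
/-- Index of `β_i` in the base set of `C_{(2,d,d)}`. -/
def idxB (d : ℕ) (i : Fin d) : Fin (4 * d) := ⟨d + i.1, by have := i.2; omega⟩
/-- Index of `γ_i` in the base set of `C_{(2,d,d)}`. -/
def idxC (d : ℕ) (i : Fin d) : Fin (4 * d) := ⟨2 * d + i.1, by have := i.2; omega⟩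
/-- Index of `δ_i` in the base set of `C_{(2,d,d)}`. -/
def idxD (d : ℕ) (i : Fin d) : Fin (4 * d) := ⟨3 * d + i.1, by have := i.2; omega⟩

/-- The code `C_{(2,d,d)}` on the `4d` neurons `α_1,…,α_d,β_1,…,β_d,γ_1,…,γ_d,δ_1,…,δ_d`. -/
def code2dd (d : ℕ) : Set (Finset (Fin (4 * d))) :=
  {σ | σ = ∅ ∨
    (∃ i : Fin d, σ = {idxB d i, idxC d i}) ∨
    (∃ i j : Fin d, (j : ℕ) = (i : ℕ) + 1 ∧ σ = {idxB d i, idxB d j, idxC d i}) ∨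
    (∃ i j : Fin d, (j : ℕ) = (i : ℕ) + 1 ∧ σ = {idxB d i, idxB d j}) ∨
    (∃ i j : Fin d, (j : ℕ) = (i : ℕ) + 1 ∧ σ = {idxB d i, idxB d j, idxC d j}) ∨
    (∃ i : Fin d, σ = {idxA d i, idxB d i, idxC d i, idxD d i}) ∨
    (∃ i : Fin d, σ = {idxA d i, idxD d i}) ∨
    σ = Finset.univ.image (idxA d) ∪ Finset.univ.image (idxD d) ∨
    σ = Finset.univ.image (idxD d)}

namespace CP
open Real

/-- the basic angle -/
def ph (d : ℕ) : ℝ := π / (2*(d+2))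
def cc (d : ℕ) : ℝ := Real.cos (ph d)
def ss (d : ℕ) : ℝ := Real.sin (ph d)
def ep (d : ℕ) : ℝ := 1 - cc d
def Aa (d : ℕ) : ℝ := 1 + ep d/4
def Rr (d : ℕ) : ℝ := 1 + 3*ep d/8
def Bb (d : ℕ) : ℝ := 1 + ep d/2
def mu (d : ℕ) : ℝ := ep d/8

variable {d : ℕ}

lemma ph_pos : 0 < ph d := by
  have h := Real.pi_pos
  have h2 : (0:ℝ) < 2*((d:ℝ)+2) := by positivity
  unfold ph; positivity

lemma ph_lt_half : ph d < π/2 := by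
  unfold ph
  have h1 : (0:ℝ) < π := Real.pi_pos
  rw [div_lt_div_iff₀ (by positivity) (by norm_num)]
  have : (0:ℝ) ≤ (d:ℝ) := by positivity
  nlinarith

lemma theta_lt_half {k : ℕ} (h : k ≤ d+1) : (k:ℝ) * ph d < π/2 := by
  have hk : (k:ℝ) ≤ (d:ℝ)+1 := by exact_mod_cast h
  have hp := ph_pos (d := d)
  have h2 : ((d:ℝ)+1) * ph d < π/2 := by
    unfold ph
    rw [← mul_div_assoc, div_lt_div_iff₀ (by positivity) (by norm_num)]
    have : (0:ℝ) ≤ (d:ℝ) := by positivity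
    nlinarith [Real.pi_pos]
  nlinarith

lemma theta_nonneg {k : ℕ} : 0 ≤ (k:ℝ) * ph d := by
  have := ph_pos (d := d); positivity

lemma sin_theta_nonneg {k : ℕ} (h : k ≤ d+1) : 0 ≤ Real.sin ((k:ℝ) * ph d) := by
  apply Real.sin_nonneg_of_nonneg_of_le_pi theta_nonneg
  linarith [theta_lt_half (d := d) h, Real.pi_pos]

lemma cos_theta_pos {k : ℕ} (h : k ≤ d+1) : 0 < Real.cos ((k:ℝ) * ph d) := by
  apply Real.cos_pos_of_mem_Ioo
  constructor
  · linarith [theta_nonneg (d := d) (k := k), Real.pi_pos]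
  · exact theta_lt_half h

lemma cc_pos : 0 < cc d := by
  have := cos_theta_pos (d := d) (k := 1) (by omega)
  simpa [cc] using this

lemma ss_pos : 0 < ss d := by
  unfold ss
  exact Real.sin_pos_of_pos_of_lt_pi (ph_pos) (by linarith [ph_lt_half (d := d), Real.pi_pos])

lemma cs_sq : cc d^2 + ss d^2 = 1 := by
  unfold cc ss
  have := Real.sin_sq_add_cos_sq (ph d); nlinarith

lemma cc_lt_one : cc d < 1 := by
  nlinarith [cs_sq (d := d), ss_pos (d := d), cc_pos (d := d)]

lemma ep_pos : 0 < ep d := by unfold ep; linarith [cc_lt_one (d := d)]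
lemma ep_lt_one : ep d < 1 := by unfold ep; linarith [cc_pos (d := d)]

lemma one_lt_Aa : 1 < Aa d := by unfold Aa; linarith [ep_pos (d := d)]
lemma Aa_lt_Rr : Aa d < Rr d := by unfold Aa Rr; linarith [ep_pos (d := d)]
lemma Rr_lt_Bb : Rr d < Bb d := by unfold Rr Bb; linarith [ep_pos (d := d)]
lemma Aa_lt_Bb : Aa d < Bb d := by linarith [Aa_lt_Rr (d := d), Rr_lt_Bb (d := d)]
lemma one_lt_Bb : 1 < Bb d := by linarith [one_lt_Aa (d := d), Aa_lt_Bb (d := d)]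
lemma one_lt_Rr : 1 < Rr d := by linarith [one_lt_Aa (d := d), Aa_lt_Rr (d := d)]
lemma mu_pos : 0 < mu d := by unfold mu; linarith [ep_pos (d := d)]

lemma cc_eq : cc d = 1 - ep d := by unfold ep; ring

lemma ccBb_lt_one : cc d * Bb d < 1 := by
  have h1 := ep_pos (d := d); have h2 := ep_lt_one (d := d)
  rw [cc_eq]; unfold Bb; nlinarith

lemma ccBb_lt_Aa : cc d * Bb d < Aa d := by
  linarith [ccBb_lt_one (d := d), one_lt_Aa (d := d)]

lemma Bb_A_mu : Bb d - Aa d ≤ 2*mu d := by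
  unfold Bb Aa mu; linarith [ep_pos (d := d)]

/-- coordinates: the k-th direction functional -/
def X (d k : ℕ) (p : Euc 2) : ℝ :=
  Real.sin ((k:ℝ)*ph d) * p 0 + Real.cos ((k:ℝ)*ph d) * p 1

lemma X_comb (k : ℕ) (a b : ℝ) (p q : Euc 2) :
    X d k (a • p + b • q) = a * X d k p + b * X d k q := by
  unfold X
  have h0 : (a • p + b • q) 0 = a * p 0 + b * q 0 := rfl
  have h1 : (a • p + b • q) 1 = a * p 1 + b * q 1 := rfl
  rw [h0, h1]; ring

lemma p1_comb (a b : ℝ) (p q : Euc 2) : (a • p + b • q) 1 = a * p 1 + b * q 1 := rfl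

lemma X_cont (k : ℕ) : Continuous (X d k) := by
  unfold X
  exact ((continuous_const.mul ((continuous_apply (0 : Fin 2)).comp (PiLp.continuous_ofLp 2 _))).add
    (continuous_const.mul ((continuous_apply (1 : Fin 2)).comp (PiLp.continuous_ofLp 2 _))))

/-- the three-term recurrence -/
lemma X_rec (k : ℕ) (p : Euc 2) :
    X d k p + X d (k+2) p = 2 * cc d * X d (k+1) p := by
  unfold X cc
  have e1 : ((k:ℕ)+2:ℕ) = ((k:ℕ)+1+1:ℕ) := by ring
  push_cast
  have e2 : ((k:ℝ)+2)*ph d = ((k:ℝ)+1)*ph d + ph d := by ring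
  have e0 : (k:ℝ)*ph d = ((k:ℝ)+1)*ph d - ph d := by ring
  rw [e2, e0, Real.sin_add, Real.cos_add, Real.sin_sub, Real.cos_sub]
  ring

/-- decay of cosines: `cos (n φ) ≤ c ^ n` in the relevant range. -/
lemma cos_decay {n : ℕ} (h : n ≤ d+1) : Real.cos ((n:ℝ)*ph d) ≤ cc d ^ n := by
  induction n with
  | zero => simp
  | succ m ih =>
    have hm : m ≤ d+1 := by omega
    have ihm := ih hm
    have hsin : 0 ≤ Real.sin ((m:ℝ)*ph d) := sin_theta_nonneg hm
    have hs := ss_pos (d := d)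
    have hc := cc_pos (d := d)
    have e : ((m+1:ℕ):ℝ)*ph d = (m:ℝ)*ph d + ph d := by push_cast; ring
    rw [e, Real.cos_add]
    have h2 : Real.cos ((m:ℝ)*ph d) * Real.cos (ph d) ≤ cc d ^ m * cc d :=
      mul_le_mul_of_nonneg_right ihm (le_of_lt hc)
    have h3 : 0 ≤ Real.sin ((m:ℝ)*ph d) * Real.sin (ph d) := mul_nonneg hsin (le_of_lt hs)
    have : cc d ^ m * cc d = cc d ^ (m+1) := by ring
    unfold cc ss at *
    linarith

/-- nonadjacent exclusion via the recurrence -/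
lemma not_both_big {k : ℕ} (p : Euc 2) (h1 : Aa d ≤ X d k p) (h2 : Aa d ≤ X d (k+2) p)
    (h3 : X d (k+1) p < Bb d) : False := by
  have hrec := X_rec (d := d) k p
  have hc := cc_pos (d := d)
  have h4 := ccBb_lt_Aa (d := d)
  have h5 : cc d * X d (k+1) p < cc d * Bb d := mul_lt_mul_of_pos_left h3 hc
  linarith

/-- the flame lemma : a point serving `δ_i` above level 1 has positive second coordinate -/
lemma flame_pos {i : ℕ} (hid : i + 1 ≤ d) (p : Euc 2)
    (h0 : X d i p < 1) (h2 : X d (i+2) p < 1) (h1 : 1 ≤ X d (i+1) p) : 0 < p 1 := by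
  set θ : ℝ := ((i+1 : ℕ):ℝ) * ph d with hθ
  have hθ0 : 0 ≤ θ := theta_nonneg
  have hθh : θ + ph d ≤ π/2 := by
    have h : ((i+2 : ℕ):ℝ) * ph d < π/2 := theta_lt_half (by omega)
    rw [hθ]; push_cast at h ⊢; nlinarith [ph_pos (d := d)]
  -- bounds on cos θ and sin θ
  have hpp := ph_pos (d := d)
  have hcos : ss d ≤ Real.cos θ := by
    unfold ss
    have h' : Real.cos (π/2 - ph d) ≤ Real.cos θ := by
      apply Real.cos_le_cos_of_nonneg_of_le_pi hθ0 _ (by linarith)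
      linarith [Real.pi_pos]
    rwa [Real.cos_pi_div_two_sub] at h'
  have hsin1 : Real.sin θ ≤ cc d := by
    unfold cc
    rw [show Real.sin θ = Real.cos (π/2 - θ) from (Real.cos_pi_div_two_sub θ).symm]
    apply Real.cos_le_cos_of_nonneg_of_le_pi (le_of_lt hpp) _ (by linarith)
    linarith [Real.pi_pos]
  have hsin0 : 0 ≤ Real.sin θ := sin_theta_nonneg (by omega)
  -- the rotated coordinates
  set x : ℝ := X d (i+1) p with hx
  set w : ℝ := Real.cos θ * p 0 - Real.sin θ * p 1 with hw
  have hxdef : x = Real.sin θ * p 0 + Real.cos θ * p 1 := rfl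
  have hXi : X d i p = cc d * x - ss d * w := by
    have e0 : (↑i * ph d) = θ - ph d := by rw [hθ]; push_cast; ring
    have : X d i p = Real.sin (θ - ph d) * p 0 + Real.cos (θ - ph d) * p 1 := by
      unfold X; rw [e0]
    rw [this, Real.sin_sub, Real.cos_sub, hxdef, hw]
    unfold cc ss; ring
  have hXi2 : X d (i+2) p = cc d * x + ss d * w := by
    have e2 : (↑(i+2) * ph d) = θ + ph d := by rw [hθ]; push_cast; ring
    have : X d (i+2) p = Real.sin (θ + ph d) * p 0 + Real.cos (θ + ph d) * p 1 := by
      unfold X; rw [e2]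
    rw [this, Real.sin_add, Real.cos_add, hxdef, hw]
    unfold cc ss; ring
  have hp1 : p 1 = Real.cos θ * x - Real.sin θ * w := by
    rw [hxdef, hw]
    linear_combination (-(p 1)) * (Real.sin_sq_add_cos_sq θ)
  have hsw1 : ss d * w < (1 - cc d) * x := by
    rw [hXi2] at h2; linarith
  have hsw2 : -(ss d * w) < (1 - cc d) * x := by
    rw [hXi] at h0; linarith
  -- conclude
  have hs := ss_pos (d := d)
  have hc := cc_pos (d := d)
  have hc1 := cc_lt_one (d := d)
  have key : (1 - cc d) * x ≤ ss d * p 1 := by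
    rw [hp1]
    have t1 : Real.sin θ * (ss d * w) ≤ Real.sin θ * ((1 - cc d) * x) :=
      mul_le_mul_of_nonneg_left (le_of_lt hsw1) hsin0
    have hx0 : 0 ≤ (1 - cc d) * x := by
      apply mul_nonneg (by linarith) (by linarith)
    have t2 : Real.sin θ * ((1 - cc d) * x) ≤ cc d * ((1 - cc d) * x) :=
      mul_le_mul_of_nonneg_right hsin1 hx0
    have t3 : ss d * ss d * x ≤ ss d * Real.cos θ * x := by
      have hsx : 0 ≤ ss d * x := mul_nonneg (le_of_lt hs) (by linarith)
      calc ss d * ss d * x = ss d * (ss d * x) := by ring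
        _ ≤ Real.cos θ * (ss d * x) := mul_le_mul_of_nonneg_right hcos hsx
        _ = ss d * Real.cos θ * x := by ring
    have hss : ss d * ss d * x = (1 - cc d * cc d) * x := by
      have := cs_sq (d := d); nlinarith
    have expand : ss d * (Real.cos θ * x - Real.sin θ * w)
        = ss d * Real.cos θ * x - Real.sin θ * (ss d * w) := by ring
    rw [expand]
    have t2' : Real.sin θ * ((1 - cc d) * x) = Real.sin θ * x - Real.sin θ * (cc d * x) := by ring
    nlinarith [t1, t2, t3, hss]
  have h1cx : (1 - cc d) * 1 ≤ (1 - cc d) * x :=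
    mul_le_mul_of_nonneg_left h1 (by linarith)
  by_contra hneg
  push_neg at hneg
  have : ss d * p 1 ≤ 0 := mul_nonpos_of_nonneg_of_nonpos (le_of_lt hs) hneg
  linarith

/-- beta set of rung `i` (uses direction `i+1`) -/
def bSet (d i : ℕ) : Set (Euc 2) :=
  {p | (Aa d < X d (i+1) p ∧ X d (i+1) p < Bb d) ∧
       (∀ k, k ≤ d+1 → k ≠ i+1 → X d k p < X d (i+1) p + mu d ∧ X d k p < Bb d) ∧
       (∀ k, k ≤ d+1 → (k+2 ≤ i+1 ∨ i+3 ≤ k) → X d k p < Aa d)}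

def cSet (d i : ℕ) : Set (Euc 2) :=
  bSet d i ∩ {p | (1 ≤ i → 3*X d i p < Aa d + 2*X d (i+1) p) ∧
                  (i+2 ≤ d → 3*X d (i+2) p < Aa d + 2*X d (i+1) p)}

def dSet (d i : ℕ) : Set (Euc 2) :=
  {p | (∀ k, k ≤ d+1 → k ≠ i+1 → X d k p < 1) ∧ X d (i+1) p < Rr d}

def aSet (d i : ℕ) : Set (Euc 2) := dSet d i ∩ {p | 0 < p 1}

lemma combo_lt {a b x y r s : ℝ} (ha : 0 ≤ a) (hb : 0 ≤ b) (hab : a + b = 1)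
    (hx : x < r) (hy : y < s) : a*x + b*y < a*r + b*s := by
  rcases eq_or_lt_of_le ha with h|h
  · have hb1 : b = 1 := by linarith
    rw [← h, hb1]; simpa
  · have h1 : a*x < a*r := by exact mul_lt_mul_of_pos_left hx h
    have h2 : b*y ≤ b*s := mul_le_mul_of_nonneg_left (le_of_lt hy) hb
    linarith

lemma bSet_convex (i : ℕ) : Convex ℝ (bSet d i) := by
  intro p hp q hq a b ha hb hab
  obtain ⟨⟨hp1, hp2⟩, hp3, hp4⟩ := hp
  obtain ⟨⟨hq1, hq2⟩, hq3, hq4⟩ := hq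
  refine ⟨⟨?_, ?_⟩, ?_, ?_⟩
  · rw [X_comb]
    calc Aa d = a * Aa d + b * Aa d := by rw [← add_mul, hab]; ring
      _ < _ := combo_lt ha hb hab hp1 hq1
  · rw [X_comb]
    calc a * X d (i+1) p + b * X d (i+1) q < a * Bb d + b * Bb d :=
          combo_lt ha hb hab hp2 hq2
      _ = Bb d := by rw [← add_mul, hab]; ring
  · intro k hk hki
    constructor
    · rw [X_comb, X_comb]
      have := combo_lt ha hb hab (hp3 k hk hki).1 (hq3 k hk hki).1
      calc a * X d k p + b * X d k q
          < a * (X d (i+1) p + mu d) + b * (X d (i+1) q + mu d) := this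
        _ = a * X d (i+1) p + b * X d (i+1) q + (a+b) * mu d := by ring
        _ = a * X d (i+1) p + b * X d (i+1) q + mu d := by rw [hab]; ring
    · rw [X_comb]
      calc a * X d k p + b * X d k q < a * Bb d + b * Bb d :=
            combo_lt ha hb hab (hp3 k hk hki).2 (hq3 k hk hki).2
        _ = Bb d := by rw [← add_mul, hab]; ring
  · intro k hk hki
    rw [X_comb]
    calc a * X d k p + b * X d k q < a * Aa d + b * Aa d :=
          combo_lt ha hb hab (hp4 k hk hki) (hq4 k hk hki)
      _ = Aa d := by rw [← add_mul, hab]; ring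

lemma dSet_convex (i : ℕ) : Convex ℝ (dSet d i) := by
  intro p hp q hq a b ha hb hab
  obtain ⟨hp1, hp2⟩ := hp
  obtain ⟨hq1, hq2⟩ := hq
  constructor
  · intro k hk hki
    rw [X_comb]
    calc a * X d k p + b * X d k q < a * 1 + b * 1 :=
          combo_lt ha hb hab (hp1 k hk hki) (hq1 k hk hki)
      _ = 1 := by rw [← add_mul, hab]; ring
  · rw [X_comb]
    calc a * X d (i+1) p + b * X d (i+1) q < a * Rr d + b * Rr d :=
          combo_lt ha hb hab hp2 hq2
      _ = Rr d := by rw [← add_mul, hab]; ring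

lemma cSet_convex (i : ℕ) : Convex ℝ (cSet d i) := by
  apply Convex.inter (bSet_convex i)
  intro p hp q hq a b ha hb hab
  obtain ⟨hp1, hp2⟩ := hp
  obtain ⟨hq1, hq2⟩ := hq
  constructor
  · intro h
    have e1 : X d i (a • p + b • q) = a * X d i p + b * X d i q := X_comb ..
    have e2 : X d (i+1) (a • p + b • q) = a * X d (i+1) p + b * X d (i+1) q := X_comb ..
    rw [e1, e2]
    have := combo_lt ha hb hab (hp1 h) (hq1 h)
    calc 3*(a * X d i p + b * X d i q) = a * (3*X d i p) + b * (3*X d i q) := by ring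
      _ < a * (Aa d + 2*X d (i+1) p) + b * (Aa d + 2*X d (i+1) q) := this
      _ = (a+b)*Aa d + 2*(a * X d (i+1) p + b * X d (i+1) q) := by ring
      _ = Aa d + 2*(a * X d (i+1) p + b * X d (i+1) q) := by rw [hab]; ring
  · intro h
    have e1 : X d (i+2) (a • p + b • q) = a * X d (i+2) p + b * X d (i+2) q := X_comb ..
    have e2 : X d (i+1) (a • p + b • q) = a * X d (i+1) p + b * X d (i+1) q := X_comb ..
    rw [e1, e2]
    have := combo_lt ha hb hab (hp2 h) (hq2 h)
    calc 3*(a * X d (i+2) p + b * X d (i+2) q) = a * (3*X d (i+2) p) + b * (3*X d (i+2) q) := by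
          ring
      _ < a * (Aa d + 2*X d (i+1) p) + b * (Aa d + 2*X d (i+1) q) := this
      _ = (a+b)*Aa d + 2*(a * X d (i+1) p + b * X d (i+1) q) := by ring
      _ = Aa d + 2*(a * X d (i+1) p + b * X d (i+1) q) := by rw [hab]; ring

lemma aSet_convex (i : ℕ) : Convex ℝ (aSet d i) := by
  apply Convex.inter (dSet_convex i)
  intro p hp q hq a b ha hb hab
  have e : (a • p + b • q) 1 = a * p 1 + b * q 1 := rfl
  simp only [Set.mem_setOf_eq] at *
  rw [e]
  rcases eq_or_lt_of_le ha with h|h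
  · have hb1 : b = 1 := by linarith
    rw [← h, hb1]; simpa
  · have h1 : 0 < a * p 1 := mul_pos h hp
    have h2 : 0 ≤ b * q 1 := mul_nonneg hb (le_of_lt hq)
    linarith

lemma bSet_open (i : ℕ) : IsOpen (bSet d i) := by
  have : bSet d i =
      ({p : Euc 2 | Aa d < X d (i+1) p} ∩ {p | X d (i+1) p < Bb d}) ∩
      ((⋂ k ∈ (Finset.range (d+2)).filter (fun k => k ≠ i+1),
          ({p : Euc 2 | X d k p < X d (i+1) p + mu d} ∩ {p | X d k p < Bb d})) ∩
       (⋂ k ∈ (Finset.range (d+2)).filter (fun k => k+2 ≤ i+1 ∨ i+3 ≤ k),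
          {p : Euc 2 | X d k p < Aa d})) := by
    ext p
    simp only [bSet, Set.mem_inter_iff, Set.mem_setOf_eq, Set.mem_iInter,
      Finset.mem_filter, Finset.mem_range, Nat.lt_succ_iff]
    constructor
    · rintro ⟨⟨h1, h2⟩, h3, h4⟩
      exact ⟨⟨h1, h2⟩, fun k hk => h3 k (by omega) hk.2, fun k hk => h4 k (by omega) hk.2⟩
    · rintro ⟨⟨h1, h2⟩, h3, h4⟩
      refine ⟨⟨h1, h2⟩, fun k hk hki => h3 k ⟨by omega, hki⟩, fun k hk hki => h4 k ⟨by omega, hki⟩⟩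
  rw [this]
  apply IsOpen.inter
  · exact (isOpen_lt continuous_const (X_cont _)).inter (isOpen_lt (X_cont _) continuous_const)
  apply IsOpen.inter
  · apply isOpen_biInter_finset
    intro k _
    exact (isOpen_lt (X_cont _) ((X_cont _).add continuous_const)).inter
      (isOpen_lt (X_cont _) continuous_const)
  · apply isOpen_biInter_finset
    intro k _
    exact isOpen_lt (X_cont _) continuous_const

lemma dSet_open (i : ℕ) : IsOpen (dSet d i) := by
  have : dSet d i =
      (⋂ k ∈ (Finset.range (d+2)).filter (fun k => k ≠ i+1), {p : Euc 2 | X d k p < 1}) ∩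
      {p : Euc 2 | X d (i+1) p < Rr d} := by
    ext p
    simp only [dSet, Set.mem_inter_iff, Set.mem_setOf_eq, Set.mem_iInter,
      Finset.mem_filter, Finset.mem_range, Nat.lt_succ_iff]
    constructor
    · rintro ⟨h1, h2⟩
      exact ⟨fun k hk => h1 k (by omega) hk.2, h2⟩
    · rintro ⟨h1, h2⟩
      exact ⟨fun k hk hki => h1 k ⟨by omega, hki⟩, h2⟩
  rw [this]
  apply IsOpen.inter
  · apply isOpen_biInter_finset
    intro k _
    exact isOpen_lt (X_cont _) continuous_const
  · exact isOpen_lt (X_cont _) continuous_const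

lemma p1_cont : Continuous (fun p : Euc 2 => p 1) := (continuous_apply (1 : Fin 2)).comp (PiLp.continuous_ofLp 2 _)

lemma aSet_open (i : ℕ) : IsOpen (aSet d i) :=
  (dSet_open i).inter (isOpen_lt continuous_const p1_cont)

lemma cSet_open (i : ℕ) : IsOpen (cSet d i) := by
  apply (bSet_open i).inter
  have : {p : Euc 2 | (1 ≤ i → 3*X d i p < Aa d + 2*X d (i+1) p) ∧
                  (i+2 ≤ d → 3*X d (i+2) p < Aa d + 2*X d (i+1) p)} =
      {p : Euc 2 | (1 ≤ i → 3*X d i p < Aa d + 2*X d (i+1) p)} ∩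
      {p : Euc 2 | (i+2 ≤ d → 3*X d (i+2) p < Aa d + 2*X d (i+1) p)} := rfl
  rw [this]
  apply IsOpen.inter
  · by_cases h : 1 ≤ i
    · have : {p : Euc 2 | (1 ≤ i → 3*X d i p < Aa d + 2*X d (i+1) p)} =
          {p : Euc 2 | 3*X d i p < Aa d + 2*X d (i+1) p} := by
        ext p; simp [h]
      rw [this]
      exact isOpen_lt (continuous_const.mul (X_cont _))
        (continuous_const.add (continuous_const.mul (X_cont _)))
    · have : {p : Euc 2 | (1 ≤ i → 3*X d i p < Aa d + 2*X d (i+1) p)} = Set.univ := by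
        ext p; simp [h]
      rw [this]; exact isOpen_univ
  · by_cases h : i+2 ≤ d
    · have : {p : Euc 2 | (i+2 ≤ d → 3*X d (i+2) p < Aa d + 2*X d (i+1) p)} =
          {p : Euc 2 | 3*X d (i+2) p < Aa d + 2*X d (i+1) p} := by
        ext p; simp [h]
      rw [this]
      exact isOpen_lt (continuous_const.mul (X_cont _))
        (continuous_const.add (continuous_const.mul (X_cont _)))
    · have : {p : Euc 2 | (i+2 ≤ d → 3*X d (i+2) p < Aa d + 2*X d (i+1) p)} = Set.univ := by
        ext p; simp [h]
      rw [this]; exact isOpen_univ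


/-! ### witness points -/

def wit (d j : ℕ) (a b : ℝ) : Euc 2 :=
  (WithLp.equiv 2 (Fin 2 → ℝ)).symm
    ![a*Real.sin ((j:ℝ)*ph d) + b*Real.sin (((j:ℝ)+1)*ph d),
      a*Real.cos ((j:ℝ)*ph d) + b*Real.cos (((j:ℝ)+1)*ph d)]

lemma wit_0 (j : ℕ) (a b : ℝ) :
    wit d j a b 0 = a*Real.sin ((j:ℝ)*ph d) + b*Real.sin (((j:ℝ)+1)*ph d) := rfl

lemma wit_1 (j : ℕ) (a b : ℝ) :
    wit d j a b 1 = a*Real.cos ((j:ℝ)*ph d) + b*Real.cos (((j:ℝ)+1)*ph d) := rfl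

lemma wit_X (j k : ℕ) (a b : ℝ) :
    X d k (wit d j a b) =
      a * Real.cos (((k:ℝ) - j)*ph d) + b * Real.cos (((k:ℝ) - ((j:ℝ)+1))*ph d) := by
  unfold X
  rw [wit_0, wit_1]
  have e1 : ((k:ℝ) - j)*ph d = (k:ℝ)*ph d - (j:ℝ)*ph d := by ring
  have e2 : ((k:ℝ) - ((j:ℝ)+1))*ph d = (k:ℝ)*ph d - ((j:ℝ)+1)*ph d := by ring
  rw [e1, e2, Real.cos_sub, Real.cos_sub]
  ring

lemma wit_X_self (j : ℕ) (a b : ℝ) : X d j (wit d j a b) = a + b * cc d := by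
  rw [wit_X]
  have e1 : ((j:ℝ) - j)*ph d = 0 := by ring
  have e2 : ((j:ℝ) - ((j:ℝ)+1))*ph d = -(ph d) := by ring
  rw [e1, e2, Real.cos_zero, Real.cos_neg]
  unfold cc; ring

lemma wit_X_succ (j : ℕ) (a b : ℝ) : X d (j+1) (wit d j a b) = a * cc d + b := by
  rw [wit_X]
  have e1 : (((j+1:ℕ):ℝ) - j)*ph d = ph d := by push_cast; ring
  have e2 : (((j+1:ℕ):ℝ) - ((j:ℝ)+1))*ph d = 0 := by push_cast; ring
  rw [e1, e2, Real.cos_zero]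
  unfold cc; ring

lemma Bb_pos : 0 < Bb d := by linarith [one_lt_Bb (d := d)]

lemma cpow_le {n : ℕ} (hn : 1 ≤ n) : cc d ^ n ≤ cc d := by
  have h := pow_le_pow_of_le_one (le_of_lt (cc_pos (d := d))) (le_of_lt (cc_lt_one (d := d))) hn
  simpa using h

/-- all coordinates other than `j`, `j+1` of a witness are at most `c·B`. -/
lemma wit_other {j k : ℕ} (hj : j ≤ d) (hk : k ≤ d+1) (h1 : k ≠ j) (h2 : k ≠ j+1)
    {a b : ℝ} (ha : 0 ≤ a) (hb : 0 ≤ b)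
    (hP : a + b * cc d ≤ Bb d) (hQ : a * cc d + b ≤ Bb d) :
    X d k (wit d j a b) ≤ cc d * Bb d := by
  have hc0 := cc_pos (d := d)
  have hB := Bb_pos (d := d)
  rw [wit_X]
  rcases lt_or_gt_of_ne h1 with hkj | hkj
  · -- k < j
    set n : ℕ := j - k with hn
    have hn1 : 1 ≤ n := by omega
    have e1 : ((k:ℝ) - j)*ph d = -((n:ℕ):ℝ)*ph d := by
      rw [hn]; push_cast [Nat.cast_sub (by omega : k ≤ j)]; ring
    have e2 : ((k:ℝ) - ((j:ℝ)+1))*ph d = -(((n+1:ℕ)):ℝ)*ph d := by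
      rw [hn]; push_cast [Nat.cast_sub (by omega : k ≤ j)]; ring
    rw [e1, e2]
    rw [show -((n:ℕ):ℝ)*ph d = -(((n:ℕ):ℝ)*ph d) by ring,
        show -(((n+1:ℕ)):ℝ)*ph d = -((((n+1:ℕ)):ℝ)*ph d) by ring,
        Real.cos_neg, Real.cos_neg]
    have d1 : Real.cos ((n:ℝ)*ph d) ≤ cc d ^ n := cos_decay (by omega)
    have d2 : Real.cos (((n+1:ℕ):ℝ)*ph d) ≤ cc d ^ (n+1) := cos_decay (by omega)
    have t1 : a * Real.cos ((n:ℝ)*ph d) ≤ a * cc d ^ n := mul_le_mul_of_nonneg_left d1 ha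
    have t2 : b * Real.cos (((n+1:ℕ):ℝ)*ph d) ≤ b * cc d ^ (n+1) :=
      mul_le_mul_of_nonneg_left d2 hb
    have key : a * cc d ^ n + b * cc d ^ (n+1) ≤ cc d * Bb d := by
      have e : a * cc d ^ n + b * cc d ^ (n+1) = cc d ^ n * (a + b * cc d) := by ring
      rw [e]
      calc cc d ^ n * (a + b * cc d) ≤ cc d ^ n * Bb d := by
            apply mul_le_mul_of_nonneg_left hP (by positivity)
        _ ≤ cc d * Bb d := mul_le_mul_of_nonneg_right (cpow_le hn1) (le_of_lt hB)
    linarith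
  · -- k > j+1
    set n : ℕ := k - (j+1) with hn
    have hn1 : 1 ≤ n := by omega
    have e1 : ((k:ℝ) - j)*ph d = (((n+1:ℕ)):ℝ)*ph d := by
      rw [hn]; push_cast [Nat.cast_sub (by omega : j+1 ≤ k)]; ring
    have e2 : ((k:ℝ) - ((j:ℝ)+1))*ph d = ((n:ℕ):ℝ)*ph d := by
      rw [hn]; push_cast [Nat.cast_sub (by omega : j+1 ≤ k)]; ring
    rw [e1, e2]
    have d1 : Real.cos (((n+1:ℕ):ℝ)*ph d) ≤ cc d ^ (n+1) := cos_decay (by omega)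
    have d2 : Real.cos ((n:ℝ)*ph d) ≤ cc d ^ n := cos_decay (by omega)
    have t1 : a * Real.cos (((n+1:ℕ):ℝ)*ph d) ≤ a * cc d ^ (n+1) :=
      mul_le_mul_of_nonneg_left d1 ha
    have t2 : b * Real.cos ((n:ℝ)*ph d) ≤ b * cc d ^ n := mul_le_mul_of_nonneg_left d2 hb
    have key : a * cc d ^ (n+1) + b * cc d ^ n ≤ cc d * Bb d := by
      have e : a * cc d ^ (n+1) + b * cc d ^ n = cc d ^ n * (a * cc d + b) := by ring
      rw [e]
      calc cc d ^ n * (a * cc d + b) ≤ cc d ^ n * Bb d := by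
            apply mul_le_mul_of_nonneg_left hQ (by positivity)
        _ ≤ cc d * Bb d := mul_le_mul_of_nonneg_right (cpow_le hn1) (le_of_lt hB)
    linarith

lemma wit_p1_pos {j : ℕ} (hj : j ≤ d) {a b : ℝ} (ha : 0 ≤ a) (hb : 0 ≤ b)
    (hab : 0 < a + b) : 0 < wit d j a b 1 := by
  rw [wit_1]
  have h1 : 0 < Real.cos ((j:ℝ)*ph d) := cos_theta_pos (by omega)
  have h2 : 0 ≤ Real.cos (((j:ℝ)+1)*ph d) := by
    have := cos_theta_pos (d := d) (k := j+1) (by omega)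
    push_cast at this; linarith
  -- a or b is positive
  rcases eq_or_lt_of_le ha with h|h
  · have hb' : 0 < b := by linarith
    have := mul_pos hb' (by
      have := cos_theta_pos (d := d) (k := j+1) (by omega : j+1 ≤ d+1)
      push_cast at this; exact this)
    nlinarith
  · nlinarith [mul_pos h h1, mul_nonneg hb h2]

/-! ### structural lemmas about the sets -/

variable {p : Euc 2}

lemma bSet_mem_iff {i : ℕ} : p ∈ bSet d i ↔
    (Aa d < X d (i+1) p ∧ X d (i+1) p < Bb d) ∧
    (∀ k, k ≤ d+1 → k ≠ i+1 → X d k p < X d (i+1) p + mu d ∧ X d k p < Bb d) ∧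
    (∀ k, k ≤ d+1 → (k+2 ≤ i+1 ∨ i+3 ≤ k) → X d k p < Aa d) := Iff.rfl

lemma dSet_mem_iff {i : ℕ} : p ∈ dSet d i ↔
    (∀ k, k ≤ d+1 → k ≠ i+1 → X d k p < 1) ∧ X d (i+1) p < Rr d := Iff.rfl

lemma cSet_mem_iff {i : ℕ} : p ∈ cSet d i ↔ p ∈ bSet d i ∧
    ((1 ≤ i → 3*X d i p < Aa d + 2*X d (i+1) p) ∧
     (i+2 ≤ d → 3*X d (i+2) p < Aa d + 2*X d (i+1) p)) := Iff.rfl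

lemma aSet_mem_iff {i : ℕ} : p ∈ aSet d i ↔ p ∈ dSet d i ∧ 0 < p 1 := Iff.rfl

lemma not_bSet_of_le {m : ℕ} (h : X d (m+1) p ≤ Aa d) : p ∉ bSet d m := by
  intro hb; have := hb.1.1; linarith

lemma not_dSet_big {m k : ℕ} (hk : k ≤ d+1) (hkm : k ≠ m+1) (hbig : 1 ≤ X d k p) :
    p ∉ dSet d m := by
  intro hd; have := hd.1 k hk hkm; linarith

lemma not_dSet_R {m : ℕ} (h : Rr d ≤ X d (m+1) p) : p ∉ dSet d m := by
  intro hd; have := hd.2; linarith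

/-- two occupied rungs are adjacent -/
lemma bAdj {a b : ℕ} (ha : a < d) (hb : b < d) (h1 : p ∈ bSet d a) (h2 : p ∈ bSet d b) :
    a = b ∨ a+1 = b ∨ b+1 = a := by
  by_contra hcon
  push_neg at hcon
  obtain ⟨e1, e2, e3⟩ := hcon
  rcases lt_trichotomy a b with h|h|h
  · have hfar : a + 2 ≤ b := by omega
    have := h1.2.2 (b+1) (by omega) (by omega)
    have := h2.1.1
    linarith
  · exact e1 h
  · have hfar : b + 2 ≤ a := by omega
    have := h2.2.2 (a+1) (by omega) (by omega)
    have := h1.1.1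
    linarith

/-- in the presence of `δ_i`, `β_i` forces `γ_i` -/
lemma gamma_of_bd {i : ℕ} (hi : i < d) (hb : p ∈ bSet d i) (hd : p ∈ dSet d i) :
    p ∈ cSet d i := by
  have hA := one_lt_Aa (d := d)
  have hx := hb.1.1
  refine ⟨hb, ?_, ?_⟩
  · intro _
    have h0 : X d i p < 1 := hd.1 i (by omega) (by omega)
    linarith
  · intro _
    have h0 : X d (i+2) p < 1 := hd.1 (i+2) (by omega) (by omega)
    linarith

/-- in the presence of `δ_i`, `β_i` forces `α_i` -/
lemma alpha_of_bd {i : ℕ} (hi : i < d) (hb : p ∈ bSet d i) (hd : p ∈ dSet d i) :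
    p ∈ aSet d i := by
  refine ⟨hd, ?_⟩
  apply flame_pos (d := d) (i := i) (by omega)
  · exact hd.1 i (by omega) (by omega)
  · exact hd.1 (i+2) (by omega) (by omega)
  · have := hb.1.1; linarith [one_lt_Aa (d := d)]

/-- a lone rung forces its `γ` -/
lemma gamma_of_single {i : ℕ} (hi : i < d) (hb : p ∈ bSet d i)
    (hnR : i+2 ≤ d → p ∉ bSet d (i+1)) (hnL : ∀ m, m + 1 = i → p ∉ bSet d m) :
    p ∈ cSet d i := by
  obtain ⟨⟨ha1, ha2⟩, hroof, hfiat⟩ := hb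
  have hA1 := one_lt_Aa (d := d)
  have hmu := mu_pos (d := d)
  have hBA := Bb_A_mu (d := d)
  refine ⟨⟨⟨ha1, ha2⟩, hroof, hfiat⟩, ?_, ?_⟩
  · -- left W
    intro h1i
    obtain ⟨m, rfl⟩ : ∃ m, i = m+1 := ⟨i-1, by omega⟩
    by_contra hW
    push_neg at hW
    -- X_{m+1} is large
    have hxA : Aa d < X d (m+1) p := by linarith
    have hxB : X d (m+1) p < Bb d := (hroof (m+1) (by omega) (by omega)).2
    have hdiff : X d (m+2) p - X d (m+1) p < mu d := by linarith
    have hX3A : X d (m+3) p < Aa d := by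
      by_contra hcon
      push_neg at hcon
      exact not_both_big (k := m+1) p (le_of_lt hxA) hcon ha2
    apply hnL m rfl
    refine ⟨⟨hxA, hxB⟩, ?_, ?_⟩
    · intro k hk hkm
      constructor
      · by_cases h2 : k = m+2
        · subst h2; linarith
        by_cases h3 : k = m+3
        · subst h3; linarith
        · have : X d k p < Aa d := by
            apply hfiat k hk; omega
          linarith
      · by_cases h2 : k = m+2
        · subst h2; exact ha2
        · exact (hroof k hk h2).2
    · intro k hk hcond
      rcases hcond with h|h
      · exact hfiat k hk (Or.inl (by omega))
      · by_cases h3 : k = m+3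
        · subst h3; exact hX3A
        · exact hfiat k hk (Or.inr (by omega))
  · -- right W
    intro h2i
    by_contra hW
    push_neg at hW
    have hx2A : Aa d < X d (i+2) p := by linarith
    have hx2B : X d (i+2) p < Bb d := (hroof (i+2) (by omega) (by omega)).2
    have hdiff : X d (i+1) p - X d (i+2) p < mu d := by linarith
    have hXiA : X d i p < Aa d := by
      by_contra hcon
      push_neg at hcon
      exact not_both_big (k := i) p hcon (le_of_lt hx2A) ha2
    apply hnR h2i
    refine ⟨⟨hx2A, hx2B⟩, ?_, ?_⟩
    · intro k hk hkm
      constructor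
      · by_cases h2 : k = i+1
        · subst h2; linarith
        by_cases h3 : k = i
        · subst h3; linarith
        · have : X d k p < Aa d := by
            apply hfiat k hk; omega
          linarith
      · by_cases h2 : k = i+1
        · subst h2; exact ha2
        · exact (hroof k hk h2).2
    · intro k hk hcond
      rcases hcond with h|h
      · by_cases h3 : k = i
        · subst h3; exact hXiA
        · exact hfiat k hk (Or.inl (by omega))
      · exact hfiat k hk (Or.inr (by omega))

/-- for an adjacent occupied pair the left γ needs only the inner condition -/
lemma gamma_left_of_pair {t : ℕ} (ht : t+1 < d) (hb1 : p ∈ bSet d t) (hb2 : p ∈ bSet d (t+1))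
    (hW : 3*X d (t+2) p < Aa d + 2*X d (t+1) p) : p ∈ cSet d t := by
  refine ⟨hb1, ?_, fun _ => hW⟩
  intro h1t
  have hXt : X d t p < Aa d := hb2.2.2 t (by omega) (Or.inl (by omega))
  have := hb1.1.1
  linarith [one_lt_Aa (d := d)]

lemma gamma_right_of_pair {t : ℕ} (ht : t+1 < d) (hb1 : p ∈ bSet d t) (hb2 : p ∈ bSet d (t+1))
    (hW : 3*X d (t+1) p < Aa d + 2*X d (t+2) p) : p ∈ cSet d (t+1) := by
  refine ⟨hb2, fun _ => hW, ?_⟩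
  intro h3t
  have hXt : X d (t+3) p < Aa d := hb1.2.2 (t+3) (by omega) (Or.inr (by omega))
  have := hb2.1.1
  linarith [one_lt_Aa (d := d)]

lemma gamma_pair_not_both {t : ℕ} (ht : t+1 < d) (hc1 : p ∈ cSet d t)
    (hc2 : p ∈ cSet d (t+1)) : False := by
  have h1 := hc1.2.2 (by omega)
  have h2 := hc2.2.1 (by omega)
  have h3 := hc1.1.1.1
  have h4 := hc2.1.1.1
  linarith [one_lt_Aa (d := d)]

end CP

namespace CP

variable {d : ℕ}

/-- the realization -/
def Ufam (d : ℕ) : Fin (4*d) → Set (Euc 2) := fun n =>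
  if n.val < d then aSet d n.val
  else if n.val < 2*d then bSet d (n.val - d)
  else if n.val < 3*d then cSet d (n.val - 2*d)
  else dSet d (n.val - 3*d)

lemma Ufam_A (i : Fin d) : Ufam d (idxA d i) = aSet d i.val := by
  have h := i.isLt
  have hv : (idxA d i).val = i.val := rfl
  unfold Ufam
  rw [hv, if_pos h]

lemma Ufam_B (i : Fin d) : Ufam d (idxB d i) = bSet d i.val := by
  have h := i.isLt
  have hv : (idxB d i).val = d + i.val := rfl
  unfold Ufam
  rw [hv, if_neg (by omega), if_pos (by omega)]
  rw [Nat.add_sub_cancel_left]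

lemma Ufam_C (i : Fin d) : Ufam d (idxC d i) = cSet d i.val := by
  have h := i.isLt
  have hv : (idxC d i).val = 2*d + i.val := rfl
  unfold Ufam
  rw [hv, if_neg (by omega), if_neg (by omega), if_pos (by omega)]
  rw [Nat.add_sub_cancel_left]

lemma Ufam_D (i : Fin d) : Ufam d (idxD d i) = dSet d i.val := by
  have h := i.isLt
  have hv : (idxD d i).val = 3*d + i.val := rfl
  unfold Ufam
  rw [hv, if_neg (by omega), if_neg (by omega), if_neg (by omega)]
  rw [Nat.add_sub_cancel_left]

lemma fin4d_cases (n : Fin (4*d)) :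
    (∃ i : Fin d, n = idxA d i) ∨ (∃ i : Fin d, n = idxB d i) ∨
    (∃ i : Fin d, n = idxC d i) ∨ (∃ i : Fin d, n = idxD d i) := by
  have h := n.isLt
  by_cases h1 : n.val < d
  · exact Or.inl ⟨⟨n.val, h1⟩, by apply Fin.ext; simp [idxA]⟩
  by_cases h2 : n.val < 2*d
  · exact Or.inr (Or.inl ⟨⟨n.val - d, by omega⟩, by apply Fin.ext; simp [idxB]; omega⟩)
  by_cases h3 : n.val < 3*d
  · exact Or.inr (Or.inr (Or.inl ⟨⟨n.val - 2*d, by omega⟩, by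
      apply Fin.ext; simp [idxC]; omega⟩))
  · exact Or.inr (Or.inr (Or.inr ⟨⟨n.val - 3*d, by omega⟩, by
      apply Fin.ext; simp [idxD]; omega⟩))

/-- `p` matches the codeword `T` -/
def Matches (d : ℕ) (p : Euc 2) (T : Finset (Fin (4*d))) : Prop :=
  (∀ i : Fin d, p ∈ aSet d i.val ↔ idxA d i ∈ T) ∧
  (∀ i : Fin d, p ∈ bSet d i.val ↔ idxB d i ∈ T) ∧
  (∀ i : Fin d, p ∈ cSet d i.val ↔ idxC d i ∈ T) ∧
  (∀ i : Fin d, p ∈ dSet d i.val ↔ idxD d i ∈ T)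

lemma Matches.mem_iff {p : Euc 2} {T : Finset (Fin (4*d))} (h : Matches d p T)
    (n : Fin (4*d)) : p ∈ Ufam d n ↔ n ∈ T := by
  rcases fin4d_cases n with ⟨i, rfl⟩ | ⟨i, rfl⟩ | ⟨i, rfl⟩ | ⟨i, rfl⟩
  · rw [Ufam_A]; exact h.1 i
  · rw [Ufam_B]; exact h.2.1 i
  · rw [Ufam_C]; exact h.2.2.1 i
  · rw [Ufam_D]; exact h.2.2.2 i

lemma Matches.mem_codeOf {p : Euc 2} {T : Finset (Fin (4*d))} (h : Matches d p T) :
    T ∈ codeOf (Ufam d) := ⟨p, fun n => h.mem_iff n⟩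

lemma Matches.sigma_eq {p : Euc 2} {T σ : Finset (Fin (4*d))} (h : Matches d p T)
    (hp : ∀ n, p ∈ Ufam d n ↔ n ∈ σ) : σ = T := by
  apply Finset.ext
  intro n
  rw [← hp n, h.mem_iff n]

end CP


namespace CP

variable {d : ℕ} {p : Euc 2}

@[simp] lemma idxA_val (i : Fin d) : (idxA d i).val = i.val := rfl
@[simp] lemma idxB_val (i : Fin d) : (idxB d i).val = d + i.val := rfl
@[simp] lemma idxC_val (i : Fin d) : (idxC d i).val = 2*d + i.val := rfl
@[simp] lemma idxD_val (i : Fin d) : (idxD d i).val = 3*d + i.val := rfl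

/-- the nine codeword shapes -/

lemma match_empty (hb : ∀ m, m < d → p ∉ bSet d m) (hd : ∀ m, m < d → p ∉ dSet d m) :
    Matches d p (∅ : Finset (Fin (4*d))) := by
  refine ⟨?_, ?_, ?_, ?_⟩ <;> intro m <;>
    simp only [Finset.notMem_empty, iff_false]
  · exact fun h => hd m.val m.isLt h.1
  · exact hb m.val m.isLt
  · exact fun h => hb m.val m.isLt h.1
  · exact hd m.val m.isLt

lemma match_single {i : ℕ} (hi : i < d)
    (hb : p ∈ bSet d i) (hnd : p ∉ dSet d i)
    (huniq : ∀ m, m < d → m ≠ i → p ∉ bSet d m) :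
    Matches d p {idxB d ⟨i, hi⟩, idxC d ⟨i, hi⟩} := by
  have hA1 := one_lt_Aa (d := d)
  have hbig : 1 ≤ X d (i+1) p := by linarith [hb.1.1]
  have hno_d : ∀ m : Fin d, p ∉ dSet d m.val := by
    intro m
    by_cases hmi : m.val = i
    · rw [hmi]; exact hnd
    · exact not_dSet_big (k := i+1) (by omega) (by omega) hbig
  have hc : p ∈ cSet d i := gamma_of_single hi hb
      (fun h hb2 => huniq (i+1) (by omega) (by omega) hb2)
      (fun m hm hb2 => huniq m (by omega) (by omega) hb2)
  refine ⟨?_, ?_, ?_, ?_⟩ <;> intro m <;>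
    simp only [Finset.mem_insert, Finset.mem_singleton, Fin.ext_iff,
      idxA_val, idxB_val, idxC_val, idxD_val] <;> constructor
  · intro h; exact absurd h.1 (hno_d m)
  · intro h; exfalso; have := m.isLt; omega
  · intro h
    have e : m.val = i := by
      by_contra hne; exact huniq m.val m.isLt hne h
    left; omega
  · intro h
    have e : m.val = i := by have := m.isLt; omega
    rw [e]; exact hb
  · intro h
    have e : m.val = i := by
      by_contra hne; exact huniq m.val m.isLt hne h.1
    right; omega
  · intro h
    have e : m.val = i := by have := m.isLt; omega
    rw [e]; exact hc
  · intro h; exact absurd h (hno_d m)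
  · intro h; exfalso; have := m.isLt; omega

lemma match_five {i : ℕ} (hi : i < d)
    (hb : p ∈ bSet d i) (hd : p ∈ dSet d i) :
    Matches d p {idxA d ⟨i, hi⟩, idxB d ⟨i, hi⟩, idxC d ⟨i, hi⟩, idxD d ⟨i, hi⟩} := by
  have hA1 := one_lt_Aa (d := d)
  have hbig : 1 ≤ X d (i+1) p := by linarith [hb.1.1]
  have hnob : ∀ m, m < d → m ≠ i → p ∉ bSet d m := by
    intro m hm hmi hbm
    have := hd.1 (m+1) (by omega) (by omega)
    have := hbm.1.1
    linarith
  have hnod : ∀ m : Fin d, m.val ≠ i → p ∉ dSet d m.val := by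
    intro m hmi
    exact not_dSet_big (k := i+1) (by omega) (by omega) hbig
  have ha : p ∈ aSet d i := alpha_of_bd hi hb hd
  have hc : p ∈ cSet d i := gamma_of_bd hi hb hd
  refine ⟨?_, ?_, ?_, ?_⟩ <;> intro m <;>
    simp only [Finset.mem_insert, Finset.mem_singleton, Fin.ext_iff,
      idxA_val, idxB_val, idxC_val, idxD_val] <;> constructor
  · intro h
    have e : m.val = i := by
      by_contra hne; exact hnod m hne h.1
    left; omega
  · intro h
    have e : m.val = i := by have := m.isLt; omega
    rw [e]; exact ha
  · intro h
    have e : m.val = i := by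
      by_contra hne; exact hnob m.val m.isLt hne h
    right; left; omega
  · intro h
    have e : m.val = i := by have := m.isLt; omega
    rw [e]; exact hb
  · intro h
    have e : m.val = i := by
      by_contra hne; exact hnob m.val m.isLt hne h.1
    right; right; left; omega
  · intro h
    have e : m.val = i := by have := m.isLt; omega
    rw [e]; exact hc
  · intro h
    have e : m.val = i := by
      by_contra hne; exact hnod m hne h
    right; right; right; omega
  · intro h
    have e : m.val = i := by have := m.isLt; omega
    rw [e]; exact hd

lemma match_six {i : ℕ} (hi : i < d)
    (hd' : p ∈ dSet d i) (h1 : 1 ≤ X d (i+1) p) (h2 : X d (i+1) p ≤ Aa d) :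
    Matches d p {idxA d ⟨i, hi⟩, idxD d ⟨i, hi⟩} := by
  have hnob : ∀ m, m < d → p ∉ bSet d m := by
    intro m hm hbm
    by_cases hmi : m = i
    · subst hmi; exact absurd hbm.1.1 (by linarith)
    · have := hd'.1 (m+1) (by omega) (by omega)
      have := hbm.1.1
      linarith [one_lt_Aa (d := d)]
  have hnod : ∀ m : Fin d, m.val ≠ i → p ∉ dSet d m.val := by
    intro m hmi
    exact not_dSet_big (k := i+1) (by omega) (by omega) h1
  have ha : p ∈ aSet d i := by
    refine ⟨hd', ?_⟩
    apply flame_pos (d := d) (i := i) (by omega)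
    · exact hd'.1 i (by omega) (by omega)
    · exact hd'.1 (i+2) (by omega) (by omega)
    · exact h1
  refine ⟨?_, ?_, ?_, ?_⟩ <;> intro m <;>
    simp only [Finset.mem_insert, Finset.mem_singleton, Fin.ext_iff,
      idxA_val, idxB_val, idxC_val, idxD_val] <;> constructor
  · intro h
    have e : m.val = i := by
      by_contra hne; exact hnod m hne h.1
    left; omega
  · intro h
    have e : m.val = i := by have := m.isLt; omega
    rw [e]; exact ha
  · intro h; exact absurd h (hnob m.val m.isLt)
  · intro h; exfalso; have := m.isLt; omega
  · intro h; exact absurd h.1 (hnob m.val m.isLt)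
  · intro h; exfalso; have := m.isLt; omega
  · intro h
    have e : m.val = i := by
      by_contra hne; exact hnod m hne h
    right; omega
  · intro h
    have e : m.val = i := by have := m.isLt; omega
    rw [e]; exact hd'

lemma match_seven (hall : ∀ k, k ≤ d+1 → X d k p < 1) (hp1 : 0 < p 1) :
    Matches d p (Finset.univ.image (idxA d) ∪ Finset.univ.image (idxD d)) := by
  have hA1 := one_lt_Aa (d := d)
  have hR1 := one_lt_Rr (d := d)
  have hdall : ∀ m : Fin d, p ∈ dSet d m.val := by
    intro m
    exact ⟨fun k hk _ => hall k hk, by linarith [hall (m.val+1) (by omega : m.val+1 ≤ d+1)]⟩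
  have hnob : ∀ m : Fin d, p ∉ bSet d m.val := by
    intro m hbm
    have := hall (m.val+1) (by omega : m.val+1 ≤ d+1)
    have := hbm.1.1
    linarith
  refine ⟨?_, ?_, ?_, ?_⟩ <;> intro m <;>
    simp only [Finset.mem_union, Finset.mem_image, Finset.mem_univ, true_and,
      Fin.ext_iff, idxA_val, idxB_val, idxC_val, idxD_val] <;> constructor
  · intro _; exact Or.inl ⟨m, rfl⟩
  · intro _; exact ⟨hdall m, hp1⟩
  · intro h; exact absurd h (hnob m)
  · rintro (⟨a, ha⟩ | ⟨a, ha⟩) <;> (exfalso; have := m.isLt; have := a.isLt; omega)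
  · intro h; exact absurd h.1 (hnob m)
  · rintro (⟨a, ha⟩ | ⟨a, ha⟩) <;> (exfalso; have := m.isLt; have := a.isLt; omega)
  · intro _; exact Or.inr ⟨m, rfl⟩
  · intro _; exact hdall m

lemma match_eight (hall : ∀ k, k ≤ d+1 → X d k p < 1) (hp1 : p 1 ≤ 0) :
    Matches d p (Finset.univ.image (idxD d)) := by
  have hA1 := one_lt_Aa (d := d)
  have hR1 := one_lt_Rr (d := d)
  have hdall : ∀ m : Fin d, p ∈ dSet d m.val := by
    intro m
    exact ⟨fun k hk _ => hall k hk, by linarith [hall (m.val+1) (by omega : m.val+1 ≤ d+1)]⟩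
  have hnob : ∀ m : Fin d, p ∉ bSet d m.val := by
    intro m hbm
    have := hall (m.val+1) (by omega : m.val+1 ≤ d+1)
    have := hbm.1.1
    linarith
  refine ⟨?_, ?_, ?_, ?_⟩ <;> intro m <;>
    simp only [Finset.mem_image, Finset.mem_univ, true_and,
      Fin.ext_iff, idxA_val, idxB_val, idxC_val, idxD_val] <;> constructor
  · intro h; exact absurd h.2 (not_lt.mpr hp1)
  · rintro ⟨a, ha⟩; exfalso; have := m.isLt; have := a.isLt; omega
  · intro h; exact absurd h (hnob m)
  · rintro ⟨a, ha⟩; exfalso; have := m.isLt; have := a.isLt; omega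
  · intro h; exact absurd h.1 (hnob m)
  · rintro ⟨a, ha⟩; exfalso; have := m.isLt; have := a.isLt; omega
  · intro _; exact ⟨m, rfl⟩
  · intro _; exact hdall m

/-- common part for the three adjacent-pair shapes -/
lemma pair_basic {t : ℕ} (ht : t+1 < d) (hb1 : p ∈ bSet d t) (hb2 : p ∈ bSet d (t+1)) :
    (∀ m : Fin d, p ∉ dSet d m.val) ∧
    (∀ m : Fin d, p ∈ bSet d m.val ↔ (m.val = t ∨ m.val = t+1)) := by
  have hA1 := one_lt_Aa (d := d)
  have hbig1 : 1 ≤ X d (t+1) p := by linarith [hb1.1.1]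
  have hbig2 : 1 ≤ X d (t+2) p := by linarith [hb2.1.1]
  constructor
  · intro m
    by_cases hmt : m.val = t
    · exact not_dSet_big (k := t+2) (by omega) (by omega) hbig2
    · exact not_dSet_big (k := t+1) (by omega) (by omega) hbig1
  · intro m
    constructor
    · intro h
      have h1 := bAdj (by omega) m.isLt hb1 h
      have h2 := bAdj (by omega) m.isLt hb2 h
      omega
    · intro h
      rcases h with h|h <;> rw [h]
      · exact hb1
      · exact hb2

lemma match_pair_left {t : ℕ} (ht : t+1 < d) (hb1 : p ∈ bSet d t) (hb2 : p ∈ bSet d (t+1))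
    (hW : 3*X d (t+2) p < Aa d + 2*X d (t+1) p) :
    Matches d p {idxB d ⟨t, by omega⟩, idxB d ⟨t+1, ht⟩, idxC d ⟨t, by omega⟩} := by
  obtain ⟨hnod, hbiff⟩ := pair_basic ht hb1 hb2
  have hc1 : p ∈ cSet d t := gamma_left_of_pair ht hb1 hb2 hW
  have hnc2 : p ∉ cSet d (t+1) := fun h => gamma_pair_not_both ht hc1 h
  refine ⟨?_, ?_, ?_, ?_⟩ <;> intro m <;>
    simp only [Finset.mem_insert, Finset.mem_singleton, Fin.ext_iff,
      idxA_val, idxB_val, idxC_val, idxD_val] <;> constructor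
  · intro h; exact absurd h.1 (hnod m)
  · intro h; exfalso; have := m.isLt; omega
  · intro h
    have := (hbiff m).1 h
    omega
  · intro h
    have e : m.val = t ∨ m.val = t+1 := by have := m.isLt; omega
    exact (hbiff m).2 e
  · intro h
    have e : m.val = t ∨ m.val = t+1 := (hbiff m).1 h.1
    rcases e with e|e
    · right; right; omega
    · exfalso; rw [e] at h; exact hnc2 h
  · intro h
    have e : m.val = t := by have := m.isLt; omega
    rw [e]; exact hc1
  · intro h; exact absurd h (hnod m)
  · intro h; exfalso; have := m.isLt; omega

lemma match_pair_right {t : ℕ} (ht : t+1 < d) (hb1 : p ∈ bSet d t) (hb2 : p ∈ bSet d (t+1))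
    (hW : 3*X d (t+1) p < Aa d + 2*X d (t+2) p) :
    Matches d p {idxB d ⟨t, by omega⟩, idxB d ⟨t+1, ht⟩, idxC d ⟨t+1, ht⟩} := by
  obtain ⟨hnod, hbiff⟩ := pair_basic ht hb1 hb2
  have hc2 : p ∈ cSet d (t+1) := gamma_right_of_pair ht hb1 hb2 hW
  have hnc1 : p ∉ cSet d t := fun h => gamma_pair_not_both ht h hc2
  refine ⟨?_, ?_, ?_, ?_⟩ <;> intro m <;>
    simp only [Finset.mem_insert, Finset.mem_singleton, Fin.ext_iff,
      idxA_val, idxB_val, idxC_val, idxD_val] <;> constructor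
  · intro h; exact absurd h.1 (hnod m)
  · intro h; exfalso; have := m.isLt; omega
  · intro h
    have := (hbiff m).1 h
    omega
  · intro h
    have e : m.val = t ∨ m.val = t+1 := by have := m.isLt; omega
    exact (hbiff m).2 e
  · intro h
    have e : m.val = t ∨ m.val = t+1 := (hbiff m).1 h.1
    rcases e with e|e
    · exfalso; rw [e] at h; exact hnc1 h
    · right; right; omega
  · intro h
    have e : m.val = t+1 := by have := m.isLt; omega
    rw [e]; exact hc2
  · intro h; exact absurd h (hnod m)
  · intro h; exfalso; have := m.isLt; omega

lemma match_pair_none {t : ℕ} (ht : t+1 < d) (hb1 : p ∈ bSet d t) (hb2 : p ∈ bSet d (t+1))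
    (hW1 : ¬ 3*X d (t+2) p < Aa d + 2*X d (t+1) p)
    (hW2 : ¬ 3*X d (t+1) p < Aa d + 2*X d (t+2) p) :
    Matches d p {idxB d ⟨t, by omega⟩, idxB d ⟨t+1, ht⟩} := by
  obtain ⟨hnod, hbiff⟩ := pair_basic ht hb1 hb2
  have hnc1 : p ∉ cSet d t := fun h => hW1 (h.2.2 (by omega))
  have hnc2 : p ∉ cSet d (t+1) := fun h => hW2 (h.2.1 (by omega))
  have hnc : ∀ m : Fin d, p ∉ cSet d m.val := by
    intro m h
    have e : m.val = t ∨ m.val = t+1 := (hbiff m).1 h.1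
    rcases e with e|e
    · rw [e] at h; exact hnc1 h
    · rw [e] at h; exact hnc2 h
  refine ⟨?_, ?_, ?_, ?_⟩ <;> intro m <;>
    simp only [Finset.mem_insert, Finset.mem_singleton, Fin.ext_iff,
      idxA_val, idxB_val, idxC_val, idxD_val] <;> constructor
  · intro h; exact absurd h.1 (hnod m)
  · intro h; exfalso; have := m.isLt; omega
  · intro h
    have := (hbiff m).1 h
    omega
  · intro h
    have e : m.val = t ∨ m.val = t+1 := by have := m.isLt; omega
    exact (hbiff m).2 e
  · intro h; exact absurd h (hnc m)
  · intro h; exfalso; have := m.isLt; omega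
  · intro h; exact absurd h (hnod m)
  · intro h; exfalso; have := m.isLt; omega

end CP


namespace CP

variable {d : ℕ}

/-! ### witnesses for each codeword shape -/

lemma ray_vals (j : ℕ) (t : ℝ) :
    X d j (wit d j t 0) = t ∧ X d (j+1) (wit d j t 0) = t * cc d := by
  constructor
  · rw [wit_X_self]; ring
  · rw [wit_X_succ]; ring

lemma ray_small {i k : ℕ} (hi : i < d) (hk : k ≤ d+1) (hki : k ≠ i+1) {t : ℝ}
    (h0 : 0 ≤ t) (htB : t ≤ Bb d) : X d k (wit d (i+1) t 0) ≤ cc d * Bb d := by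
  have hc0 := cc_pos (d := d)
  have hc1 := cc_lt_one (d := d)
  have hQ : t * cc d + 0 ≤ Bb d := by nlinarith
  by_cases hk2 : k = i+2
  · subst hk2
    rw [(ray_vals (d := d) (i+1) t).2]
    nlinarith
  · apply wit_other (by omega) hk hki (by omega) h0 le_rfl (by linarith) hQ

lemma ray_bSet {i : ℕ} (hi : i < d) {t : ℝ} (hA : Aa d < t) (htB : t < Bb d) :
    wit d (i+1) t 0 ∈ bSet d i := by
  have hv := (ray_vals (d := d) (i+1) t).1
  have hcBA := ccBb_lt_Aa (d := d)
  have hmu := mu_pos (d := d)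
  have ht0 : 0 ≤ t := by linarith [one_lt_Aa (d := d)]
  refine ⟨⟨by rw [hv]; exact hA, by rw [hv]; exact htB⟩, ?_, ?_⟩
  · intro k hk hki
    have := ray_small hi hk hki ht0 (le_of_lt htB)
    constructor
    · rw [hv]; linarith
    · linarith [ccBb_lt_one (d := d), one_lt_Bb (d := d)]
  · intro k hk hcond
    have := ray_small hi hk (by omega) ht0 (le_of_lt htB)
    linarith

lemma ray_dSet {i : ℕ} (hi : i < d) {t : ℝ} (h0 : 0 ≤ t) (htR : t < Rr d) (htB : t ≤ Bb d) :
    wit d (i+1) t 0 ∈ dSet d i := by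
  have hv := (ray_vals (d := d) (i+1) t).1
  refine ⟨?_, by rw [hv]; exact htR⟩
  intro k hk hki
  have := ray_small hi hk hki h0 htB
  linarith [ccBb_lt_one (d := d)]

lemma wit_empty : ∃ p : Euc 2,
    (∀ m, m < d → p ∉ bSet d m) ∧ (∀ m, m < d → p ∉ dSet d m) := by
  refine ⟨wit d 0 2 0, ?_, ?_⟩
  · intro m hm hb
    have h2 : X d 0 (wit d 0 2 0) = 2 := by
      have := (ray_vals (d := d) 0 2).1; simpa using this
    have := (hb.2.1 0 (by omega) (by omega)).2
    rw [h2] at this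
    have hB : Bb d < 2 := by
      unfold Bb; linarith [ep_lt_one (d := d), ep_pos (d := d)]
    unfold Bb ep at hB this
    linarith
  · intro m hm hd'
    have h2 : X d 0 (wit d 0 2 0) = 2 := by
      have := (ray_vals (d := d) 0 2).1; simpa using this
    have := hd'.1 0 (by omega) (by omega)
    rw [h2] at this
    linarith

lemma wit_five {i : ℕ} (hi : i < d) : ∃ p : Euc 2, p ∈ bSet d i ∧ p ∈ dSet d i := by
  refine ⟨wit d (i+1) ((Aa d + Rr d)/2) 0, ?_, ?_⟩
  · exact ray_bSet hi (by linarith [Aa_lt_Rr (d := d)])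
      (by linarith [Aa_lt_Rr (d := d), Rr_lt_Bb (d := d)])
  · exact ray_dSet hi (by linarith [one_lt_Aa (d := d), one_lt_Rr (d := d)])
      (by linarith [Aa_lt_Rr (d := d)])
      (by linarith [Aa_lt_Rr (d := d), Rr_lt_Bb (d := d)])

lemma wit_one {i : ℕ} (hi : i < d) : ∃ p : Euc 2,
    p ∈ bSet d i ∧ p ∉ dSet d i ∧ (∀ m, m < d → m ≠ i → p ∉ bSet d m) := by
  set t : ℝ := (Rr d + Bb d)/2 with hts
  have h1 : Rr d < t := by rw [hts]; linarith [Rr_lt_Bb (d := d)]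
  have h2 : t < Bb d := by rw [hts]; linarith [Rr_lt_Bb (d := d)]
  refine ⟨wit d (i+1) t 0, ?_, ?_, ?_⟩
  · exact ray_bSet hi (by linarith [Aa_lt_Rr (d := d)]) h2
  · apply not_dSet_R
    rw [(ray_vals (d := d) (i+1) t).1]
    linarith
  · intro m hm hmi hb
    have := hb.1.1
    have hsm : X d (m+1) (wit d (i+1) t 0) ≤ cc d * Bb d :=
      ray_small hi (by omega) (by omega)
        (by linarith [one_lt_Rr (d := d), one_lt_Bb (d := d)]) (le_of_lt h2)
    linarith [ccBb_lt_Aa (d := d)]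

lemma wit_six {i : ℕ} (hi : i < d) : ∃ p : Euc 2,
    p ∈ dSet d i ∧ 1 ≤ X d (i+1) p ∧ X d (i+1) p ≤ Aa d := by
  set t : ℝ := (1 + Aa d)/2 with hts
  have hA := one_lt_Aa (d := d)
  have h1 : 1 < t := by rw [hts]; linarith
  have h2 : t < Aa d := by rw [hts]; linarith
  refine ⟨wit d (i+1) t 0, ?_, ?_, ?_⟩
  · exact ray_dSet hi (by linarith) (by linarith [Aa_lt_Rr (d := d)])
      (by linarith [Aa_lt_Bb (d := d)])
  · rw [(ray_vals (d := d) (i+1) t).1]; linarith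
  · rw [(ray_vals (d := d) (i+1) t).1]; linarith

lemma wit_seven : ∃ p : Euc 2, (∀ k, k ≤ d+1 → X d k p < 1) ∧ 0 < p 1 := by
  refine ⟨wit d 0 (1/2) 0, ?_, ?_⟩
  · intro k hk
    have hc0 := cc_pos (d := d)
    have hc1 := cc_lt_one (d := d)
    by_cases h0 : k = 0
    · subst h0; rw [(ray_vals (d := d) 0 (1/2)).1]; norm_num
    by_cases h1 : k = 1
    · subst h1
      have := (ray_vals (d := d) 0 (1/2)).2
      rw [show (0:ℕ)+1 = 1 from rfl] at this
      rw [this]; nlinarith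
    · have := wit_other (d := d) (j := 0) (k := k) (a := 1/2) (b := 0) (by omega) hk h0
        (by omega) (by norm_num) le_rfl (by norm_num; linarith [one_lt_Bb (d := d)])
        (by norm_num; nlinarith [one_lt_Bb (d := d)])
      linarith [ccBb_lt_one (d := d)]
  · exact wit_p1_pos (by omega) (by norm_num) le_rfl (by norm_num)

lemma wit_eight : ∃ p : Euc 2, (∀ k, k ≤ d+1 → X d k p < 1) ∧ p 1 ≤ 0 := by
  refine ⟨wit d 0 0 0, ?_, ?_⟩
  · intro k hk
    rw [wit_X]; norm_num
  · rw [wit_1]; norm_num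

/-- a two-parameter witness hitting prescribed values on an adjacent pair -/
lemma wit_pair {t : ℕ} (ht : t+1 < d) (P Q : ℝ)
    (hPA : Aa d < P) (hPB : P < Bb d) (hQA : Aa d < Q) (hQB : Q < Bb d)
    (hd1 : P - Q < mu d) (hd2 : Q - P < mu d) :
    ∃ p : Euc 2, X d (t+1) p = P ∧ X d (t+2) p = Q ∧ p ∈ bSet d t ∧ p ∈ bSet d (t+1) := by
  have hc0 := cc_pos (d := d)
  have hc1 := cc_lt_one (d := d)
  have hcBA := ccBb_lt_Aa (d := d)
  have hs2 : (0:ℝ) < 1 - cc d^2 := by nlinarith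
  set a : ℝ := (P - cc d * Q)/(1 - cc d^2) with has
  set b : ℝ := (Q - cc d * P)/(1 - cc d^2) with hbs
  have ha0 : 0 ≤ a := by
    rw [has]
    apply div_nonneg _ (le_of_lt hs2)
    nlinarith [one_lt_Aa (d := d)]
  have hb0 : 0 ≤ b := by
    rw [hbs]
    apply div_nonneg _ (le_of_lt hs2)
    nlinarith [one_lt_Aa (d := d)]
  have hXP : X d (t+1) (wit d (t+1) a b) = P := by
    rw [wit_X_self, has, hbs]; field_simp; ring
  have hXQ : X d (t+2) (wit d (t+1) a b) = Q := by
    rw [wit_X_succ, has, hbs]; field_simp; ring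
  have hP' : a + b * cc d ≤ Bb d := by
    have : a + b * cc d = P := by rw [has, hbs]; field_simp; ring
    linarith
  have hQ' : a * cc d + b ≤ Bb d := by
    have : a * cc d + b = Q := by rw [has, hbs]; field_simp; ring
    linarith
  have hsmall : ∀ k, k ≤ d+1 → k ≠ t+1 → k ≠ t+2 →
      X d k (wit d (t+1) a b) ≤ cc d * Bb d := by
    intro k hk h1 h2
    exact wit_other (by omega) hk h1 (by omega) ha0 hb0 hP' hQ'
  have hmu := mu_pos (d := d)
  have hB1 := one_lt_Bb (d := d)
  have hcB1 := ccBb_lt_one (d := d)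
  refine ⟨wit d (t+1) a b, hXP, hXQ, ?_, ?_⟩
  · refine ⟨⟨by rw [hXP]; exact hPA, by rw [hXP]; exact hPB⟩, ?_, ?_⟩
    · intro k hk hki
      by_cases h2 : k = t+2
      · subst h2
        rw [hXQ, hXP]
        exact ⟨by linarith, hQB⟩
      · have := hsmall k hk hki h2
        rw [hXP]
        constructor
        · linarith
        · linarith
    · intro k hk hcond
      have h1 : k ≠ t+1 := by omega
      have h2 : k ≠ t+2 := by omega
      have := hsmall k hk h1 h2
      linarith
  · refine ⟨⟨by rw [hXQ]; exact hQA, by rw [hXQ]; exact hQB⟩, ?_, ?_⟩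
    · intro k hk hki
      by_cases h1 : k = t+1
      · subst h1
        rw [hXQ, hXP]
        exact ⟨by linarith, hPB⟩
      · have := hsmall k hk h1 hki
        rw [hXQ]
        constructor
        · linarith
        · linarith
    · intro k hk hcond
      have h1 : k ≠ t+1 := by omega
      have h2 : k ≠ t+2 := by omega
      have := hsmall k hk h1 h2
      linarith

lemma wit_two {t : ℕ} (ht : t+1 < d) : ∃ p : Euc 2,
    p ∈ bSet d t ∧ p ∈ bSet d (t+1) ∧ 3*X d (t+2) p < Aa d + 2*X d (t+1) p := by
  have he := ep_pos (d := d)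
  obtain ⟨p, hP, hQ, hb1, hb2⟩ := wit_pair ht (Aa d + 3*ep d/32) (Aa d + ep d/32)
    (by linarith) (by unfold Aa Bb; linarith) (by linarith) (by unfold Aa Bb; linarith)
    (by unfold mu; linarith) (by unfold mu; linarith)
  exact ⟨p, hb1, hb2, by rw [hP, hQ]; linarith [one_lt_Aa (d := d)]⟩

lemma wit_four {t : ℕ} (ht : t+1 < d) : ∃ p : Euc 2,
    p ∈ bSet d t ∧ p ∈ bSet d (t+1) ∧ 3*X d (t+1) p < Aa d + 2*X d (t+2) p := by
  have he := ep_pos (d := d)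
  obtain ⟨p, hP, hQ, hb1, hb2⟩ := wit_pair ht (Aa d + ep d/32) (Aa d + 3*ep d/32)
    (by linarith) (by unfold Aa Bb; linarith) (by linarith) (by unfold Aa Bb; linarith)
    (by unfold mu; linarith) (by unfold mu; linarith)
  exact ⟨p, hb1, hb2, by rw [hP, hQ]; linarith [one_lt_Aa (d := d)]⟩

lemma wit_three {t : ℕ} (ht : t+1 < d) : ∃ p : Euc 2,
    p ∈ bSet d t ∧ p ∈ bSet d (t+1) ∧
    ¬ 3*X d (t+2) p < Aa d + 2*X d (t+1) p ∧
    ¬ 3*X d (t+1) p < Aa d + 2*X d (t+2) p := by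
  have he := ep_pos (d := d)
  obtain ⟨p, hP, hQ, hb1, hb2⟩ := wit_pair ht (Aa d + ep d/32) (Aa d + ep d/32)
    (by linarith) (by unfold Aa Bb; linarith) (by linarith) (by unfold Aa Bb; linarith)
    (by unfold mu; linarith) (by unfold mu; linarith)
  refine ⟨p, hb1, hb2, ?_, ?_⟩
  · rw [hP, hQ]; push_neg; linarith [one_lt_Aa (d := d)]
  · rw [hP, hQ]; push_neg; linarith [one_lt_Aa (d := d)]

end CP

/-- The code `C_{(2,d,d)}` has an open convex realization in `ℝ^2`. -/
theorem code2dd_open_in_plane (d : ℕ) (hd : 2 ≤ d) :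
    HasOpenReal (code2dd d) 2 := by
  refine ⟨CP.Ufam d, ?_, ?_, ?_⟩
  · intro n
    rcases CP.fin4d_cases n with ⟨i, rfl⟩|⟨i, rfl⟩|⟨i, rfl⟩|⟨i, rfl⟩
    · rw [CP.Ufam_A]; exact CP.aSet_convex _
    · rw [CP.Ufam_B]; exact CP.bSet_convex _
    · rw [CP.Ufam_C]; exact CP.cSet_convex _
    · rw [CP.Ufam_D]; exact CP.dSet_convex _
  · intro n
    rcases CP.fin4d_cases n with ⟨i, rfl⟩|⟨i, rfl⟩|⟨i, rfl⟩|⟨i, rfl⟩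
    · rw [CP.Ufam_A]; exact CP.aSet_open _
    · rw [CP.Ufam_B]; exact CP.bSet_open _
    · rw [CP.Ufam_C]; exact CP.cSet_open _
    · rw [CP.Ufam_D]; exact CP.dSet_open _
  · apply Set.eq_of_subset_of_subset
    · -- every realized codeword is in the code
      rintro σ ⟨p, hp⟩
      by_cases hβ : ∃ i, i < d ∧ p ∈ CP.bSet d i
      · obtain ⟨i, hi, hbi⟩ := hβ
        by_cases hdi : p ∈ CP.dSet d i
        · -- shape (v)
          refine Or.inr (Or.inr (Or.inr (Or.inr (Or.inr (Or.inl ⟨⟨i, hi⟩, ?_⟩)))))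
          exact (CP.match_five hi hbi hdi).sigma_eq hp
        · by_cases hb2 : ∃ m, m < d ∧ m ≠ i ∧ p ∈ CP.bSet d m
          · obtain ⟨m, hm, hmi, hbm⟩ := hb2
            have hadj := CP.bAdj hi hm hbi hbm
            obtain ⟨t, ht, hbt, hbt1⟩ :
                ∃ t, t+1 < d ∧ p ∈ CP.bSet d t ∧ p ∈ CP.bSet d (t+1) := by
              rcases hadj with h|h|h
              · omega
              · refine ⟨i, by omega, hbi, ?_⟩; rw [h]; exact hbm
              · refine ⟨m, by omega, hbm, ?_⟩; rw [h]; exact hbi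
            by_cases hW1 : 3*CP.X d (t+2) p < CP.Aa d + 2*CP.X d (t+1) p
            · -- shape (ii)
              refine Or.inr (Or.inr (Or.inl ⟨⟨t, by omega⟩, ⟨t+1, ht⟩, rfl, ?_⟩))
              exact (CP.match_pair_left ht hbt hbt1 hW1).sigma_eq hp
            · by_cases hW2 : 3*CP.X d (t+1) p < CP.Aa d + 2*CP.X d (t+2) p
              · -- shape (iv)
                refine Or.inr (Or.inr (Or.inr (Or.inr (Or.inl
                  ⟨⟨t, by omega⟩, ⟨t+1, ht⟩, rfl, ?_⟩))))
                exact (CP.match_pair_right ht hbt hbt1 hW2).sigma_eq hp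
              · -- shape (iii)
                refine Or.inr (Or.inr (Or.inr (Or.inl ⟨⟨t, by omega⟩, ⟨t+1, ht⟩, rfl, ?_⟩)))
                exact (CP.match_pair_none ht hbt hbt1 hW1 hW2).sigma_eq hp
          · -- shape (i)
            push_neg at hb2
            refine Or.inr (Or.inl ⟨⟨i, hi⟩, ?_⟩)
            exact (CP.match_single hi hbi hdi
              (fun m hm hne hbm => (hb2 m hm hne) hbm)).sigma_eq hp
      · push_neg at hβ
        by_cases hall : ∀ k, k ≤ d+1 → CP.X d k p < 1
        · by_cases hp1 : 0 < p 1
          · -- shape (vii)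
            refine Or.inr (Or.inr (Or.inr (Or.inr (Or.inr (Or.inr (Or.inr (Or.inl ?_)))))))
            exact (CP.match_seven hall hp1).sigma_eq hp
          · -- shape (viii)
            push_neg at hp1
            refine Or.inr (Or.inr (Or.inr (Or.inr (Or.inr (Or.inr (Or.inr (Or.inr ?_)))))))
            exact (CP.match_eight hall hp1).sigma_eq hp
        · push_neg at hall
          obtain ⟨k0, hk0, hk0big⟩ := hall
          by_cases hδ : ∃ i, i < d ∧ p ∈ CP.dSet d i
          · obtain ⟨i, hi, hdi⟩ := hδ
            have hk0i : k0 = i+1 := by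
              by_contra hne
              have := hdi.1 k0 hk0 hne
              linarith
            have h1 : 1 ≤ CP.X d (i+1) p := by rw [← hk0i]; exact hk0big
            have h2 : CP.X d (i+1) p ≤ CP.Aa d := by
              by_contra hA
              push_neg at hA
              apply hβ i hi
              refine ⟨⟨hA, by linarith [hdi.2, CP.Rr_lt_Bb (d := d)]⟩, ?_, ?_⟩
              · intro k hk hki
                have := hdi.1 k hk hki
                have hA1 := CP.one_lt_Aa (d := d)
                have hmu := CP.mu_pos (d := d)
                have hB1 := CP.one_lt_Bb (d := d)
                exact ⟨by linarith, by linarith⟩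
              · intro k hk hcond
                have := hdi.1 k hk (by omega)
                linarith [CP.one_lt_Aa (d := d)]
            -- shape (vi)
            refine Or.inr (Or.inr (Or.inr (Or.inr (Or.inr (Or.inr (Or.inl ⟨⟨i, hi⟩, ?_⟩))))))
            exact (CP.match_six hi hdi h1 h2).sigma_eq hp
          · -- shape ∅
            push_neg at hδ
            refine Or.inl ?_
            exact (CP.match_empty (fun m hm => hβ m hm) (fun m hm => hδ m hm)).sigma_eq hp
    · -- every codeword of the code is realized
      rintro σ (rfl | ⟨i, rfl⟩ | ⟨i, j, hij, rfl⟩ | ⟨i, j, hij, rfl⟩ | ⟨i, j, hij, rfl⟩ |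
        ⟨i, rfl⟩ | ⟨i, rfl⟩ | rfl | rfl)
      · obtain ⟨p, h1, h2⟩ := CP.wit_empty (d := d)
        exact (CP.match_empty h1 h2).mem_codeOf
      · obtain ⟨p, h1, h2, h3⟩ := CP.wit_one i.isLt
        exact (CP.match_single i.isLt h1 h2 h3).mem_codeOf
      · have ht : i.val + 1 < d := by have := j.isLt; omega
        have hj : j = ⟨i.val + 1, ht⟩ := by apply Fin.ext; simp [hij]
        subst hj
        obtain ⟨p, h1, h2, h3⟩ := CP.wit_two ht
        exact (CP.match_pair_left ht h1 h2 h3).mem_codeOf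
      · have ht : i.val + 1 < d := by have := j.isLt; omega
        have hj : j = ⟨i.val + 1, ht⟩ := by apply Fin.ext; simp [hij]
        subst hj
        obtain ⟨p, h1, h2, h3, h4⟩ := CP.wit_three ht
        exact (CP.match_pair_none ht h1 h2 h3 h4).mem_codeOf
      · have ht : i.val + 1 < d := by have := j.isLt; omega
        have hj : j = ⟨i.val + 1, ht⟩ := by apply Fin.ext; simp [hij]
        subst hj
        obtain ⟨p, h1, h2, h3⟩ := CP.wit_four ht
        exact (CP.match_pair_right ht h1 h2 h3).mem_codeOf
      · obtain ⟨p, h1, h2⟩ := CP.wit_five i.isLt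
        exact (CP.match_five i.isLt h1 h2).mem_codeOf
      · obtain ⟨p, h1, h2, h3⟩ := CP.wit_six i.isLt
        exact (CP.match_six i.isLt h1 h2 h3).mem_codeOf
      · obtain ⟨p, h1, h2⟩ := CP.wit_seven (d := d)
        exact (CP.match_seven h1 h2).mem_codeOf
      · obtain ⟨p, h1, h2⟩ := CP.wit_eight (d := d)
        exact (CP.match_eight h1 h2).mem_codeOf

end
end
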